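/- arXiv:1004.0474 — 3 statements merged into one kernel-verified Lean document; each statement's English description precedes it below -/
import Mathlib

section
/- For all integers M ≥ 0 and 1 ≤ n ≤ M+1: ∑_{x_1=1}^{M+1} ⋯ ∑_{x_n=1}^{M+1} ∏_{i=1}^{n} (x_i − 1/2)^2/((M+x_i)! (M+1−x_i)!) · (∏_{1≤i<j≤n} ((x_i − 1/2)^2 − (x_j − 1/2)^2))^2 = n! · 2^{2Mn} · ∏_{j=0}^{n−1} (2j+1)! / (2^{4j+2} (2M−2j)!). -/
open Finset
-- development


open Finset Polynomial

noncomputable section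
namespace Stmt17

def rho (N : ℕ) (k : ℤ) : ℝ :=
  if 0 ≤ k ∧ k ≤ (N : ℤ) then
    1 / ((Nat.factorial k.toNat : ℝ) * (Nat.factorial (N - k.toNat) : ℝ)) else 0

def bd (g : ℤ → ℝ) (k : ℤ) : ℝ := g k - g (k - 1)

def fd (f : ℤ → ℝ) (k : ℤ) : ℝ := f (k + 1) - f k

lemma frac1 (a b c : ℝ) (ha : a ≠ 0) (hb : b ≠ 0) (hc : c ≠ 0) :
    1/(a*b) = c * (1/(a*(c*b))) := by field_simp

lemma frac2 (a b c : ℝ) (ha : a ≠ 0) (hb : b ≠ 0) (hc : c ≠ 0) :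
    1/(a*b) = c * (1/((c*a)*b)) := by field_simp

lemma fact_ne (n : ℕ) : (Nat.factorial n : ℝ) ≠ 0 := by
  exact_mod_cast (Nat.factorial_pos n).ne'

lemma rho_down (N : ℕ) (k : ℤ) :
    rho N k = ((N : ℝ) + 1 - (k : ℝ)) * rho (N + 1) k := by
  unfold rho
  by_cases h0 : 0 ≤ k
  · by_cases h1 : k ≤ (N : ℤ)
    · rw [if_pos ⟨h0, h1⟩, if_pos ⟨h0, by push_cast; omega⟩]
      have hk : ((k.toNat : ℕ) : ℝ) = (k : ℝ) := by
        exact_mod_cast congrArg (fun z : ℤ => (z : ℝ)) (Int.toNat_of_nonneg h0)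
      have hkN : k.toNat ≤ N := by omega
      have hfac : (N + 1 - k.toNat) = (N - k.toNat) + 1 := by omega
      rw [hfac, Nat.factorial_succ]
      have h2 : ((N - k.toNat : ℕ) : ℝ) + 1 = (N : ℝ) + 1 - (k : ℝ) := by
        rw [Nat.cast_sub hkN, hk]; ring
      rw [Nat.cast_mul, Nat.cast_add, Nat.cast_one, ← h2]
      exact frac1 _ _ _ (fact_ne _) (fact_ne _) (by positivity)
    · by_cases h2 : k ≤ (N : ℤ) + 1
      · have hk : k = (N : ℤ) + 1 := by omega
        rw [if_neg (by omega), if_pos ⟨h0, by push_cast; omega⟩]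
        have : (N : ℝ) + 1 - (k : ℝ) = 0 := by rw [hk]; push_cast; ring
        rw [this, zero_mul]
      · rw [if_neg (by omega), if_neg (by push_cast; omega)]
        ring
  · rw [if_neg (by omega), if_neg (by omega)]; ring

lemma rho_shift (N : ℕ) (k : ℤ) :
    rho N (k - 1) = (k : ℝ) * rho (N + 1) k := by
  unfold rho
  by_cases h0 : 1 ≤ k
  · by_cases h1 : k ≤ (N : ℤ) + 1
    · rw [if_pos ⟨by omega, by push_cast; omega⟩, if_pos ⟨by omega, by push_cast; omega⟩]
      have hk1 : (k - 1).toNat = k.toNat - 1 := by omega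
      have hkpos : 1 ≤ k.toNat := by omega
      have hk : ((k.toNat : ℕ) : ℝ) = (k : ℝ) := by
        exact_mod_cast congrArg (fun z : ℤ => (z : ℝ)) (Int.toNat_of_nonneg (by omega : (0:ℤ) ≤ k))
      rw [hk1]
      have hsub : N - (k.toNat - 1) = N + 1 - k.toNat := by omega
      rw [hsub]
      have hfacs : k.toNat = (k.toNat - 1) + 1 := by omega
      rw [show k.toNat.factorial = ((k.toNat - 1)+1).factorial from by rw [← hfacs],
        Nat.factorial_succ]
      have hcast : ((k.toNat - 1 : ℕ) : ℝ) + 1 = (k : ℝ) := by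
        rw [Nat.cast_sub hkpos, hk]; ring
      rw [Nat.cast_mul, Nat.cast_add, Nat.cast_one, hcast]
      exact frac2 _ _ _ (fact_ne _) (fact_ne _) (show (k:ℝ) ≠ 0 by exact_mod_cast (by omega : k ≠ 0))
    · rw [if_neg (by omega), if_neg (by push_cast; omega)]; ring
  · by_cases h2 : k = 0
    · subst h2
      rw [if_neg (by omega), if_pos ⟨le_refl _, by positivity⟩]
      push_cast; ring
    · rw [if_neg (by omega), if_neg (by omega)]; ring

lemma step_poly (N' : ℕ) (p : Polynomial ℝ) (k : ℤ) :
    bd (fun j => p.eval (j : ℝ) * rho N' j) k =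
      ((C ((N' : ℝ) + 1) - X) * p - X * (p.comp (X - 1))).eval (k : ℝ) * rho (N' + 1) k := by
  show p.eval (k : ℝ) * rho N' k - p.eval ((k - 1 : ℤ) : ℝ) * rho N' (k - 1) = _
  rw [rho_down N' k, rho_shift N' k]
  simp only [eval_mul, eval_sub, eval_C, eval_X, eval_comp, eval_one]
  push_cast
  ring

def Q : ℕ → ℕ → Polynomial ℝ
  | _, 0 => 1
  | N'', (m+1) => (C (N'' : ℝ) - X) * (Q (N''-1) m) - X * ((Q (N''-1) m).comp (X - 1))

lemma key_identity : ∀ (m N'' : ℕ), m ≤ N'' → ∀ k : ℤ,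
    bd^[m] (rho (N'' - m)) k = (Q N'' m).eval (k : ℝ) * rho N'' k := by
  intro m
  induction m with
  | zero => intro N'' _ k; simp [Q]
  | succ m ih =>
    intro N'' hm k
    have h1 : N'' - (m+1) = (N'' - 1) - m := by omega
    have h2 : bd^[m+1] (rho (N'' - (m+1))) k = bd (bd^[m] (rho ((N''-1) - m))) k := by
      rw [h1, Function.iterate_succ_apply']
    have hfun : bd^[m] (rho ((N''-1) - m))
        = fun j : ℤ => (Q (N''-1) m).eval (j:ℝ) * rho (N''-1) j :=
      funext (ih (N''-1) (by omega))
    rw [h2, hfun, step_poly]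
    have h4 : (N''-1) + 1 = N'' := by omega
    have h5 : ((N''-1 : ℕ) : ℝ) + 1 = (N'' : ℝ) := by
      rw [Nat.cast_sub (by omega : 1 ≤ N'')]; ring
    rw [h4, h5]
    rfl


lemma coeff_comp_X_add_C (p : Polynomial ℝ) (c : ℝ) (m : ℕ) (h : p.natDegree ≤ m) :
    (p.comp (X + C c)).coeff m = p.coeff m := by
  rw [Polynomial.comp_eq_sum_left, Polynomial.sum_def, Polynomial.finset_sum_coeff]
  have hterm : ∀ e, (C (p.coeff e) * (X + C c) ^ e).coeff m
      = p.coeff e * ((X + C c) ^ e).coeff m := fun e => coeff_C_mul _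
  have hdeg : ∀ e : ℕ, ((X + C c) ^ e).natDegree = e := by
    intro e; rw [natDegree_pow, natDegree_X_add_C, mul_one]
  have htop : ((X + C c) ^ m).coeff m = 1 := by
    have h1 := ((monic_X_add_C c).pow m).coeff_natDegree
    rwa [hdeg] at h1
  have hzero : ∀ b, b < m → ((X + C c) ^ b).coeff m = 0 := by
    intro b hb
    exact coeff_eq_zero_of_natDegree_lt (by rw [hdeg]; exact hb)
  rw [Finset.sum_congr rfl (fun e _ => hterm e)]
  by_cases hm : m ∈ p.support
  · rw [Finset.sum_eq_single_of_mem m hm, htop, mul_one]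
    intro b hb hbm
    rw [hzero b (lt_of_le_of_ne (le_trans (le_natDegree_of_mem_supp b hb) h) hbm), mul_zero]
  · rw [Finset.sum_eq_zero, (Polynomial.notMem_support_iff.mp hm)]
    intro b hb
    have hbm : b ≠ m := fun hh => hm (hh ▸ hb)
    rw [hzero b (lt_of_le_of_ne (le_trans (le_natDegree_of_mem_supp b hb) h) hbm), mul_zero]

lemma coeff_comp_neg_X (p : Polynomial ℝ) (j : ℕ) :
    (p.comp (-X)).coeff j = (-1)^j * p.coeff j := by
  rw [Polynomial.comp_eq_sum_left, Polynomial.sum_def, Polynomial.finset_sum_coeff]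
  have hterm : ∀ e, (C (p.coeff e) * (-X) ^ e).coeff j = p.coeff e * ((-1:ℝ)^e * (if j = e then 1 else 0)) := by
    intro e
    rw [neg_pow, ← C_1, ← C_neg, ← C_pow, ← mul_assoc, ← C_mul, coeff_C_mul, coeff_X_pow]
    ring_nf
  rw [Finset.sum_congr rfl (fun e _ => hterm e)]
  by_cases hm : j ∈ p.support
  · rw [Finset.sum_eq_single_of_mem j hm]
    · rw [if_pos rfl]; ring
    · intro b hb hbj
      rw [if_neg (Ne.symm hbj)]; ring
  · rw [Finset.sum_eq_zero, (Polynomial.notMem_support_iff.mp hm), mul_zero]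
    intro b hb
    rw [if_neg (fun hh : j = b => hm (by rwa [hh]))]; ring

lemma natDegree_X_sub_one : (X - 1 : Polynomial ℝ).natDegree = 1 := by
  rw [show (X - 1 : Polynomial ℝ) = X - C 1 by rw [C_1], natDegree_X_sub_C]

lemma Q_natDegree : ∀ (m N'' : ℕ), (Q N'' m).natDegree ≤ m := by
  intro m
  induction m with
  | zero => intro N''; simp [Q]
  | succ m ih =>
    intro N''
    show ((C (N'' : ℝ) - X) * (Q (N''-1) m) - X * ((Q (N''-1) m).comp (X - 1))).natDegree ≤ m + 1
    apply le_trans (natDegree_sub_le _ _)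
    apply max_le
    · apply le_trans natDegree_mul_le
      have h1 : (C ((N'':ℕ) : ℝ) - X).natDegree ≤ 1 := by
        apply le_trans (natDegree_sub_le _ _); simp
      exact le_trans (add_le_add h1 (ih _)) (by omega)
    · apply le_trans natDegree_mul_le
      have h2 : ((Q (N''-1) m).comp (X - 1)).natDegree ≤ m := by
        rw [natDegree_comp, natDegree_X_sub_one, mul_one]
        exact ih _
      exact le_trans (add_le_add (le_of_eq natDegree_X) h2) (by omega)

lemma Q_coeff_top : ∀ (m N'' : ℕ), (Q N'' m).coeff m = (-2 : ℝ)^m := by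
  intro m
  induction m with
  | zero => intro N''; simp [Q]
  | succ m ih =>
    intro N''
    show ((C (N'' : ℝ) - X) * (Q (N''-1) m) - X * ((Q (N''-1) m).comp (X - 1))).coeff (m+1) = _
    have hc1 : ((C (N'' : ℝ) - X) * (Q (N''-1) m)).coeff (m+1)
        = (N'' : ℝ) * (Q (N''-1) m).coeff (m+1) - (Q (N''-1) m).coeff m := by
      rw [sub_mul, coeff_sub, coeff_C_mul, coeff_X_mul]
    have hc2 : (X * ((Q (N''-1) m).comp (X - 1))).coeff (m+1)
        = ((Q (N''-1) m).comp (X - 1)).coeff m := coeff_X_mul ((Q (N''-1) m).comp (X - 1)) m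
    have hd : (Q (N''-1) m).coeff (m+1) = 0 :=
      coeff_eq_zero_of_natDegree_lt (lt_of_le_of_lt (Q_natDegree m _) (by omega))
    have hcomp : ((Q (N''-1) m).comp (X - 1)).coeff m = (Q (N''-1) m).coeff m := by
      rw [show (X - 1 : Polynomial ℝ) = X + C (-1) by rw [map_neg, C_1]; ring]
      exact coeff_comp_X_add_C _ _ _ (Q_natDegree m _)
    rw [coeff_sub, hc1, hc2, hd, hcomp, ih]
    ring

lemma Q_symm : ∀ (m N'' : ℕ), m ≤ N'' →
    (Q N'' m).comp (C ((N'':ℕ) : ℝ) - X) = (-1:Polynomial ℝ)^m * Q N'' m := by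
  intro m
  induction m with
  | zero => intro N'' _; simp [Q]
  | succ m ih =>
    intro N'' hm
    set a : ℝ := ((N'':ℕ) : ℝ) with ha
    have hcast : ((N''-1 : ℕ) : ℝ) = a - 1 := by
      rw [ha, Nat.cast_sub (by omega : 1 ≤ N'')]; norm_num
    set p : Polynomial ℝ := Q (N''-1) m with hp
    have ihp : p.comp (C (a-1) - X) = (-1:Polynomial ℝ)^m * p := by
      have := ih (N''-1) (by omega)
      rwa [hcast] at this
    have hA : (p.comp (X-1)).comp (C a - X) = (-1:Polynomial ℝ)^m * p := by
      rw [comp_assoc]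
      have : (X - 1 : Polynomial ℝ).comp (C a - X) = C (a-1) - X := by
        simp [sub_comp, map_sub, C_1]
        try ring
      rw [this, ihp]
    have hB : p.comp (C a - X) = (-1:Polynomial ℝ)^m * (p.comp (X - 1)) := by
      have h1 : (C a - X : Polynomial ℝ) = (C (a-1) - X).comp (X - 1) := by
        simp [sub_comp, map_sub, C_1]
        try ring
      rw [h1, ← comp_assoc, ihp, mul_comp]
      congr 1
      simp [neg_comp, one_comp]
    show ((C a - X) * p - X * (p.comp (X - 1))).comp (C a - X)
        = (-1:Polynomial ℝ)^(m+1) * ((C a - X) * p - X * (p.comp (X - 1)))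
    rw [sub_comp, mul_comp, mul_comp, sub_comp, C_comp, X_comp, hA, hB]
    ring

def Bp (N m : ℕ) : Polynomial ℝ := (Q N m).comp (X + C ((N:ℝ)/2))

lemma Bp_natDegree (N m : ℕ) : (Bp N m).natDegree ≤ m := by
  rw [Bp, natDegree_comp, natDegree_X_add_C, mul_one]; exact Q_natDegree _ _

lemma Bp_coeff_top (N m : ℕ) : (Bp N m).coeff m = (-2:ℝ)^m := by
  rw [Bp, coeff_comp_X_add_C _ _ _ (Q_natDegree m N), Q_coeff_top]

lemma Bp_symm (N m : ℕ) (h : m ≤ N) :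
    (Bp N m).comp (-X) = (-1:Polynomial ℝ)^m * Bp N m := by
  rw [Bp, comp_assoc]
  have h1 : ((X : Polynomial ℝ) + C ((N:ℝ)/2)).comp (-X)
      = (C ((N:ℕ):ℝ) - X).comp (X + C ((N:ℝ)/2)) := by
    simp only [add_comp, sub_comp, X_comp, C_comp, neg_comp]
    rw [show ((N:ℝ)) = (N:ℝ)/2 + (N:ℝ)/2 by ring, C_add]
    ring
  rw [h1, ← comp_assoc, Q_symm m N h, mul_comp]
  congr 1
  simp [neg_comp, one_comp]

lemma Bp_even_coeff (N a b : ℕ) (h : 2*a+1 ≤ N) : (Bp N (2*a+1)).coeff (2*b) = 0 := by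
  have h1 := coeff_comp_neg_X (Bp N (2*a+1)) (2*b)
  rw [Bp_symm N _ h] at h1
  have h2 : ((-1:Polynomial ℝ)^(2*a+1) * Bp N (2*a+1)).coeff (2*b)
      = (-1:ℝ)^(2*a+1) * (Bp N (2*a+1)).coeff (2*b) := by
    rw [show ((-1:Polynomial ℝ)^(2*a+1)) = C ((-1:ℝ)^(2*a+1)) by simp, coeff_C_mul]
  rw [h2] at h1
  have e1 : ((-1:ℝ))^(2*a+1) = -1 := Odd.neg_one_pow ⟨a, by omega⟩
  have e2 : ((-1:ℝ))^(2*b) = 1 := Even.neg_one_pow ⟨b, by omega⟩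
  rw [e1, e2] at h1
  linarith

lemma Bp_eval (N a : ℕ) (h : 2*a+1 ≤ N) (s : ℝ) :
    (Bp N (2*a+1)).eval s
      = ∑ b ∈ range (a+1), (Bp N (2*a+1)).coeff (2*b+1) * s^(2*b+1) := by
  rw [eval_eq_sum_range' (lt_of_le_of_lt (Bp_natDegree N (2*a+1)) (by omega : 2*a+1 < 2*a+2))]
  have himg : (range (a+1)).image (fun b => 2*b+1) ⊆ range (2*a+2) := by
    intro j hj
    simp only [Finset.mem_image, Finset.mem_range] at hj ⊢
    obtain ⟨b, hb, rfl⟩ := hj; omega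
  rw [← Finset.sum_subset himg]
  · rw [Finset.sum_image (fun b _ b' _ hh => by omega : ∀ b ∈ range (a+1), ∀ b' ∈ range (a+1), 2*b+1 = 2*b'+1 → b = b')]
  · intro j hjr hjim
    rcases Nat.even_or_odd j with he | ho
    · obtain ⟨b, hb⟩ := he
      rw [show j = 2*b by omega, Bp_even_coeff N a b h, zero_mul]
    · exfalso
      obtain ⟨b, hb⟩ := ho
      apply hjim
      simp only [Finset.mem_image, Finset.mem_range]
      exact ⟨b, by simp only [Finset.mem_range] at hjr; omega, by omega⟩

def pw (e : ℕ) (t : ℝ) : ℤ → ℝ := fun k => ((k:ℝ) + t)^e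

lemma fd_sum {ι : Type*} (s : Finset ι) (F : ι → ℤ → ℝ) :
    fd (fun j => ∑ i ∈ s, F i j) = fun k => ∑ i ∈ s, fd (F i) k := by
  funext k
  unfold fd
  rw [← Finset.sum_sub_distrib]

lemma fd_iter_sum : ∀ (m : ℕ) {ι : Type*} (s : Finset ι) (F : ι → ℤ → ℝ) (k : ℤ),
    fd^[m] (fun j => ∑ i ∈ s, F i j) k = ∑ i ∈ s, fd^[m] (F i) k := by
  intro m
  induction m with
  | zero => intro ι s F k; simp
  | succ m ih =>
    intro ι s F k
    rw [Function.iterate_succ_apply, fd_sum, ih]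
    apply Finset.sum_congr rfl
    intro i _
    rw [Function.iterate_succ_apply]

lemma fd_iter_smul : ∀ (m : ℕ) (c : ℝ) (F : ℤ → ℝ) (k : ℤ),
    fd^[m] (fun j => c * F j) k = c * fd^[m] F k := by
  intro m
  induction m with
  | zero => intro c F k; simp
  | succ m ih =>
    intro c F k
    rw [Function.iterate_succ_apply, show fd (fun j => c * F j) = fun j => c * fd F j from
      funext fun j => by unfold fd; ring, ih, Function.iterate_succ_apply]

lemma fd_iter_zero_fun : ∀ (m : ℕ), fd^[m] (fun _ => (0:ℝ)) = fun _ => (0:ℝ) := by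
  intro m
  induction m with
  | zero => rfl
  | succ m ih =>
    rw [Function.iterate_succ_apply, show fd (fun _ => (0:ℝ)) = fun _ => (0:ℝ) from
      funext fun j => by unfold fd; ring, ih]

lemma fd_pw (e : ℕ) (t : ℝ) :
    fd (pw e t) = fun k => ∑ j ∈ range e, (e.choose j : ℝ) * pw j t k := by
  funext k
  unfold fd pw
  have hc : ((k+1:ℤ):ℝ) + t = ((k:ℝ)+t) + 1 := by push_cast; ring
  rw [hc, add_pow]
  rw [Finset.sum_range_succ]
  simp only [Nat.choose_self, Nat.cast_one, mul_one, one_pow, Nat.sub_self, pow_zero]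
  rw [add_sub_cancel_right]
  exact Finset.sum_congr rfl (fun j _ => mul_comm _ _)

lemma fd_iter_pw : ∀ (e : ℕ),
    (∀ (t : ℝ) (k : ℤ), fd^[e] (pw e t) k = (e.factorial : ℝ)) ∧
    (∀ (m : ℕ) (t : ℝ) (k : ℤ), e < m → fd^[m] (pw e t) k = 0) := by
  intro e
  induction e using Nat.strong_induction_on with
  | _ e ih =>
    have hself : ∀ (t : ℝ) (k : ℤ), fd^[e] (pw e t) k = (e.factorial : ℝ) := by
      match e with
      | 0 => intro t k; simp [pw]
      | (e'+1) =>
        intro t k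
        rw [Function.iterate_succ_apply, fd_pw, fd_iter_sum, Finset.sum_range_succ]
        have hmain : fd^[e'] (fun k => (((e'+1).choose e' : ℕ) : ℝ) * pw e' t k) k
            = (((e'+1).choose e' : ℕ) : ℝ) * (e'.factorial : ℝ) := by
          rw [fd_iter_smul, (ih e' (by omega)).1]
        rw [hmain, Finset.sum_eq_zero, Nat.choose_succ_self_right, Nat.factorial_succ]
        · push_cast; ring
        · intro j hj
          simp only [Finset.mem_range] at hj
          rw [fd_iter_smul, (ih j (by omega)).2 e' t k (by omega), mul_zero]
    refine ⟨hself, ?_⟩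
    intro m t k hm
    rw [show m = (m - e) + e by omega, Function.iterate_add_apply,
      show fd^[e] (pw e t) = fun _ => (e.factorial : ℝ) from funext fun j => hself t j]
    obtain ⟨r, hr⟩ : ∃ r, m - e = r + 1 := ⟨m - e - 1, by omega⟩
    rw [hr, Function.iterate_succ_apply,
      show fd (fun _ => (e.factorial:ℝ)) = fun _ => (0:ℝ) from funext fun j => by unfold fd; ring,
      fd_iter_zero_fun]

lemma sbp (N : ℕ) (f g : ℤ → ℝ) (hgN : g (N:ℤ) = 0) (hneg : ∀ k : ℤ, k < 0 → g k = 0) :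
    ∑ k ∈ Icc (0:ℤ) (N:ℤ), f k * bd g k = - ∑ k ∈ Icc (0:ℤ) (N:ℤ), fd f k * g k := by
  have hexp : ∀ k : ℤ, f k * bd g k = f k * g k - f k * g (k-1) := by
    intro k; unfold bd; ring
  rw [Finset.sum_congr rfl (fun k _ => hexp k), Finset.sum_sub_distrib]
  have step1 : ∑ k ∈ Icc (0:ℤ) (N:ℤ), f k * g (k-1) = ∑ k ∈ Icc (1:ℤ) (N:ℤ), f k * g (k-1) := by
    apply (Finset.sum_subset ?_ ?_).symm
    · intro x hx; simp only [Finset.mem_Icc] at hx ⊢; omega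
    · intro x hx hnx
      simp only [Finset.mem_Icc] at hx hnx
      rw [hneg (x-1) (by omega), mul_zero]
  have step2 : ∑ k ∈ Icc (1:ℤ) (N:ℤ), f k * g (k-1)
      = ∑ k ∈ Icc (0:ℤ) ((N:ℤ)-1), f (k+1) * g k := by
    rw [show (Icc (1:ℤ) (N:ℤ)) = Finset.map (addLeftEmbedding 1) (Icc (0:ℤ) ((N:ℤ)-1)) from by
      rw [Finset.map_add_left_Icc]; norm_num, Finset.sum_map]
    apply Finset.sum_congr rfl
    intro k _
    simp only [addLeftEmbedding_apply]
    rw [show (1:ℤ)+k = k+1 by ring, show k+1-1 = k by ring]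
  have step3 : ∑ k ∈ Icc (0:ℤ) ((N:ℤ)-1), f (k+1) * g k
      = ∑ k ∈ Icc (0:ℤ) (N:ℤ), f (k+1) * g k := by
    apply Finset.sum_subset
    · intro x hx; simp only [Finset.mem_Icc] at hx ⊢; omega
    · intro x hx hnx
      simp only [Finset.mem_Icc] at hx hnx
      rw [show x = (N:ℤ) by omega, hgN, mul_zero]
  rw [step1, step2, step3, ← Finset.sum_sub_distrib, ← Finset.sum_neg_distrib]
  apply Finset.sum_congr rfl
  intro k _
  unfold fd
  ring

lemma bd_iter_support : ∀ (m : ℕ) (N' : ℕ) (k : ℤ), (k < 0 ∨ (N':ℤ) + (m:ℤ) < k) →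
    bd^[m] (rho N') k = 0 := by
  intro m
  induction m with
  | zero =>
    intro N' k hk
    simp only [Function.iterate_zero_apply]
    unfold rho
    rw [if_neg (by push_cast at hk ⊢; omega)]
  | succ m ih =>
    intro N' k hk
    rw [Function.iterate_succ_apply']
    show bd^[m] (rho N') k - bd^[m] (rho N') (k-1) = 0
    rw [ih N' k (by push_cast at hk ⊢; omega), ih N' (k-1) (by push_cast at hk ⊢; omega), sub_zero]

lemma isbp (N N₀ : ℕ) : ∀ (m : ℕ) (f : ℤ → ℝ), N₀ + m ≤ N →
    ∑ k ∈ Icc (0:ℤ) (N:ℤ), f k * bd^[m] (rho N₀) k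
      = (-1:ℝ)^m * ∑ k ∈ Icc (0:ℤ) (N:ℤ), fd^[m] f k * rho N₀ k := by
  intro m
  induction m with
  | zero => intro f _; simp
  | succ m ih =>
    intro f hm
    have h1 : ∀ k : ℤ, f k * bd^[m+1] (rho N₀) k = f k * bd (bd^[m] (rho N₀)) k := by
      intro k; rw [Function.iterate_succ_apply']
    rw [Finset.sum_congr rfl (fun k _ => h1 k)]
    rw [sbp N f (bd^[m] (rho N₀))
      (bd_iter_support m N₀ (N:ℤ) (Or.inr (by push_cast; omega)))
      (fun k hk => bd_iter_support m N₀ k (Or.inl hk))]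
    rw [ih (fd f) (by omega)]
    have h2 : ∀ k : ℤ, fd^[m] (fd f) k = fd^[m+1] f k := by
      intro k; rw [Function.iterate_succ_apply]
    rw [Finset.sum_congr rfl (fun k _ => by rw [h2 k])]
    ring

lemma rho_sum (N₀ : ℕ) :
    ∑ k ∈ Icc (0:ℤ) (N₀:ℤ), rho N₀ k = 2^N₀ / (N₀.factorial : ℝ) := by
  rw [Finset.sum_nbij' (fun k : ℤ => k.toNat) (fun j : ℕ => (j:ℤ))
    (t := Finset.range (N₀+1)) (g := fun j => (1:ℝ) / ((j.factorial : ℝ) * ((N₀ - j).factorial : ℝ)))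
    ?_ ?_ ?_ ?_ ?_]
  · have hterm : ∀ j ∈ Finset.range (N₀+1),
        (1:ℝ) / ((j.factorial : ℝ) * ((N₀ - j).factorial : ℝ)) = (N₀.choose j : ℝ) / (N₀.factorial : ℝ) := by
      intro j hj
      simp only [Finset.mem_range] at hj
      have h := Nat.choose_mul_factorial_mul_factorial (by omega : j ≤ N₀)
      have h' : ((N₀.choose j : ℝ)) * (j.factorial : ℝ) * ((N₀ - j).factorial : ℝ) = (N₀.factorial : ℝ) := by
        exact_mod_cast congrArg (fun z : ℕ => (z : ℝ)) h
      rw [div_eq_div_iff (by positivity) (by positivity), one_mul, ← h']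
      ring
    rw [Finset.sum_congr rfl hterm, ← Finset.sum_div]
    congr 1
    rw [← Nat.cast_sum]
    exact_mod_cast congrArg (fun z : ℕ => (z : ℝ)) (Nat.sum_range_choose N₀)
  · intro k hk; simp only [Finset.mem_Icc] at hk; simp only [Finset.mem_range]; omega
  · intro j hj; simp only [Finset.mem_range] at hj; simp only [Finset.mem_Icc]; push_cast; omega
  · intro k hk; simp only [Finset.mem_Icc] at hk; omega
  · intro j hj; simp
  · intro k hk
    simp only [Finset.mem_Icc] at hk
    unfold rho
    rw [if_pos ⟨hk.1, hk.2⟩]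

lemma rho_sum_window (N N₀ : ℕ) (h : N₀ ≤ N) :
    ∑ k ∈ Icc (0:ℤ) (N:ℤ), rho N₀ k = 2^N₀ / (N₀.factorial : ℝ) := by
  rw [← rho_sum N₀]
  apply (Finset.sum_subset ?_ ?_).symm
  · intro x hx; simp only [Finset.mem_Icc] at hx ⊢; push_cast; omega
  · intro x hx hnx
    simp only [Finset.mem_Icc] at hx hnx
    unfold rho
    rw [if_neg (by push_cast at hx hnx ⊢; omega)]

theorem ortho (M a b : ℕ) (ha : a ≤ M) (hb : b ≤ a) :
    ∑ k ∈ Icc (0:ℤ) ((2*M+1:ℕ):ℤ),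
      ((k:ℝ) - ((2*M+1:ℕ):ℝ)/2)^(2*b+1) * ((Q (2*M+1) (2*a+1)).eval (k:ℝ) * rho (2*M+1) k)
    = if b = a then -(((2*a+1).factorial : ℝ) * 2^(2*M-2*a) / (((2*M-2*a).factorial : ℝ))) else 0 := by
  set N : ℕ := 2*M+1 with hN
  set m : ℕ := 2*a+1 with hm
  set N₀ : ℕ := 2*M-2*a with hN₀
  have hNm : N - m = N₀ := by omega
  have hkey : ∀ k : ℤ, (Q N m).eval (k:ℝ) * rho N k = bd^[m] (rho N₀) k := by
    intro k
    rw [← key_identity m N (by omega) k, hNm]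
  have hf : ∀ k : ℤ, ((k:ℝ) - ((N:ℕ):ℝ)/2)^(2*b+1) = pw (2*b+1) (-((N:ℕ):ℝ)/2) k := by
    intro k; unfold pw; ring_nf
  rw [Finset.sum_congr rfl (fun k _ => by rw [hkey k, hf k])]
  rw [isbp N N₀ m _ (by omega)]
  by_cases hba : b = a
  · subst hba
    rw [if_pos rfl]
    have hfd : ∀ k : ℤ, fd^[m] (pw (2*b+1) (-((N:ℕ):ℝ)/2)) k = ((2*b+1).factorial : ℝ) := by
      intro k; exact (fd_iter_pw (2*b+1)).1 _ k
    rw [Finset.sum_congr rfl (fun k _ => by rw [hfd k])]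
    have : ∑ k ∈ Icc (0:ℤ) (N:ℤ), ((2*b+1).factorial : ℝ) * rho N₀ k
        = ((2*b+1).factorial : ℝ) * (2^N₀ / (N₀.factorial : ℝ)) := by
      rw [← Finset.mul_sum, rho_sum_window N N₀ (by omega)]
    rw [this]
    have hodd : (-1:ℝ)^m = -1 := Odd.neg_one_pow ⟨b, by omega⟩
    rw [hodd]
    ring
  · rw [if_neg hba]
    have hfd : ∀ k : ℤ, fd^[m] (pw (2*b+1) (-((N:ℕ):ℝ)/2)) k = 0 := by
      intro k; exact (fd_iter_pw (2*b+1)).2 m _ k (by omega)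
    rw [Finset.sum_congr rfl (fun k _ => by rw [hfd k, zero_mul])]
    rw [Finset.sum_const, smul_zero, mul_zero]

lemma fold (M : ℕ) (E : ℝ → ℝ) :
    ∑ k ∈ Icc (0:ℤ) ((2*M+1:ℕ):ℤ), E (((k:ℝ) - ((2*M+1:ℕ):ℝ)/2)^2) * rho (2*M+1) k
    = 2 * ∑ x ∈ Finset.Icc (1:ℕ) (M+1),
        E ((((x:ℕ):ℝ) - 1/2)^2) * (1 / (((M+x).factorial : ℝ) * ((M+1-x).factorial : ℝ))) := by
  have hsplit : Icc (0:ℤ) ((2*M+1:ℕ):ℤ) = Icc (0:ℤ) (M:ℤ) ∪ Icc ((M:ℤ)+1) ((2*M+1:ℕ):ℤ) := by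
    ext k
    simp only [Finset.mem_Icc, Finset.mem_union]
    push_cast
    omega
  have hdisj : Disjoint (Icc (0:ℤ) (M:ℤ)) (Icc ((M:ℤ)+1) ((2*M+1:ℕ):ℤ)) := by
    rw [Finset.disjoint_left]
    intro k h1 h2
    simp only [Finset.mem_Icc] at h1 h2
    omega
  rw [hsplit, Finset.sum_union hdisj]
  have part1 : ∑ k ∈ Icc (0:ℤ) (M:ℤ), E (((k:ℝ) - ((2*M+1:ℕ):ℝ)/2)^2) * rho (2*M+1) k
      = ∑ x ∈ Finset.Icc (1:ℕ) (M+1),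
        E ((((x:ℕ):ℝ) - 1/2)^2) * (1 / (((M+x).factorial : ℝ) * ((M+1-x).factorial : ℝ))) := by
    apply Finset.sum_nbij' (fun k : ℤ => M + 1 - k.toNat) (fun x : ℕ => (M:ℤ)+1-(x:ℤ))
    · intro k hk; simp only [Finset.mem_Icc] at hk ⊢; omega
    · intro x hx; simp only [Finset.mem_Icc] at hx ⊢; push_cast; omega
    · intro k hk; simp only [Finset.mem_Icc] at hk; push_cast; omega
    · intro x hx; simp only [Finset.mem_Icc] at hx; omega
    · intro k hk
      simp only [Finset.mem_Icc] at hk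
      have harg : (((M + 1 - k.toNat : ℕ) : ℝ) - 1/2)^2 = ((k:ℝ) - ((2*M+1:ℕ):ℝ)/2)^2 := by
        have h1 : ((M + 1 - k.toNat : ℕ) : ℝ) = (M:ℝ) + 1 - (k:ℝ) := by
          have : ((k.toNat : ℕ) : ℝ) = (k:ℝ) := by
            exact_mod_cast congrArg (fun z : ℤ => (z:ℝ)) (Int.toNat_of_nonneg hk.1)
          rw [Nat.cast_sub (by omega), ← this]
          push_cast
          ring
        rw [h1]
        push_cast
        ring
      rw [harg]
      congr 1
      unfold rho
      rw [if_pos ⟨hk.1, by push_cast; omega⟩]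
      have e1 : M + (M + 1 - k.toNat) = (2*M+1) - k.toNat := by omega
      have e2 : M + 1 - (M + 1 - k.toNat) = k.toNat := by omega
      rw [e1, e2]
      rw [mul_comm ((Nat.factorial ((2*M+1) - k.toNat) : ℝ)) _]
  have part2 : ∑ k ∈ Icc ((M:ℤ)+1) ((2*M+1:ℕ):ℤ), E (((k:ℝ) - ((2*M+1:ℕ):ℝ)/2)^2) * rho (2*M+1) k
      = ∑ x ∈ Finset.Icc (1:ℕ) (M+1),
        E ((((x:ℕ):ℝ) - 1/2)^2) * (1 / (((M+x).factorial : ℝ) * ((M+1-x).factorial : ℝ))) := by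
    apply Finset.sum_nbij' (fun k : ℤ => k.toNat - M) (fun x : ℕ => (M:ℤ)+(x:ℤ))
    · intro k hk; simp only [Finset.mem_Icc] at hk ⊢; omega
    · intro x hx; simp only [Finset.mem_Icc] at hx ⊢; push_cast; omega
    · intro k hk; simp only [Finset.mem_Icc] at hk; push_cast; omega
    · intro x hx; simp only [Finset.mem_Icc] at hx; omega
    · intro k hk
      simp only [Finset.mem_Icc] at hk
      have harg : (((k.toNat - M : ℕ) : ℝ) - 1/2)^2 = ((k:ℝ) - ((2*M+1:ℕ):ℝ)/2)^2 := by
        have h1 : ((k.toNat - M : ℕ) : ℝ) = (k:ℝ) - (M:ℝ) := by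
          have : ((k.toNat : ℕ) : ℝ) = (k:ℝ) := by
            exact_mod_cast congrArg (fun z : ℤ => (z:ℝ)) (Int.toNat_of_nonneg (by omega))
          rw [Nat.cast_sub (by omega), ← this]
        rw [h1]
        push_cast
        ring
      rw [harg]
      congr 1
      unfold rho
      rw [if_pos ⟨by omega, hk.2⟩]
      have e1 : M + (k.toNat - M) = k.toNat := by omega
      have e2 : M + 1 - (k.toNat - M) = (2*M+1) - k.toNat := by omega
      rw [e1, e2]
  rw [part1, part2]
  ring

def cc (M a b : ℕ) : ℝ := -(Bp (2*M+1) (2*a+1)).coeff (2*b+1) / 2^(2*a+1)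

def phi (M a : ℕ) (y : ℝ) : ℝ := ∑ b ∈ range (a+1), cc M a b * y^b

def hval (M j : ℕ) : ℝ :=
  2^(2*M) * (((2*j+1).factorial : ℝ) / ((2:ℝ)^(4*j+2) * (((2*M-2*j).factorial : ℝ))))

lemma cc_diag (M a : ℕ) : cc M a a = 1 := by
  rw [cc, Bp_coeff_top]
  have : ((-2:ℝ))^(2*a+1) = -(2^(2*a+1)) := by
    rw [neg_pow, Odd.neg_one_pow ⟨a, by omega⟩]; ring
  rw [this]
  field_simp

lemma odd_expand (M a : ℕ) (h : 2*a+1 ≤ 2*M+1) (s : ℝ) :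
    s * phi M a (s^2) = -(Bp (2*M+1) (2*a+1)).eval s / 2^(2*a+1) := by
  rw [Bp_eval _ a h s, phi, Finset.mul_sum]
  rw [← Finset.sum_neg_distrib, Finset.sum_div]
  apply Finset.sum_congr rfl
  intro b _
  rw [cc]
  ring

lemma ip_mono (M a b : ℕ) (ha : a ≤ M) (hb : b ≤ a) :
    ∑ x ∈ Finset.Icc (1:ℕ) (M+1),
      ((((x:ℕ):ℝ) - 1/2)^2)^(b+1) * phi M a ((((x:ℕ):ℝ) - 1/2)^2)
        * (1 / (((M+x).factorial : ℝ) * ((M+1-x).factorial : ℝ)))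
    = if b = a then hval M a else 0 := by
  have hfold := fold M (fun y => y^(b+1) * phi M a y)
  try simp only [] at hfold
  set ν : ℝ := ((2*M+1:ℕ):ℝ)/2 with hν
  have hterm : ∀ k : ℤ,
      (((k:ℝ) - ν)^2)^(b+1) * phi M a (((k:ℝ) - ν)^2) * rho (2*M+1) k
      = (-(1:ℝ)/2^(2*a+1)) * (((k:ℝ) - ν)^(2*b+1) * ((Q (2*M+1) (2*a+1)).eval (k:ℝ) * rho (2*M+1) k)) := by
    intro k
    have hx : ∀ x : ℝ, (x^2)^(b+1) = x^(2*b+1) * x := by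
      intro x
      rw [← pow_mul, show 2*(b+1) = 2*b+1+1 from by omega, pow_succ]
    have h1 : (((k:ℝ) - ν)^2)^(b+1) * phi M a (((k:ℝ) - ν)^2)
        = ((k:ℝ) - ν)^(2*b+1) * (((k:ℝ) - ν) * phi M a (((k:ℝ) - ν)^2)) := by
      rw [hx]; ring
    have h2 : ((k:ℝ) - ν) * phi M a (((k:ℝ) - ν)^2)
        = -(Bp (2*M+1) (2*a+1)).eval ((k:ℝ) - ν) / 2^(2*a+1) := odd_expand M a (by omega) _
    have h3 : (Bp (2*M+1) (2*a+1)).eval ((k:ℝ) - ν)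
        = (Q (2*M+1) (2*a+1)).eval (k:ℝ) := by
      rw [Bp, eval_comp, eval_add, eval_X, eval_C, hν, show (k:ℝ) - ((2*M+1:ℕ):ℝ)/2 + ((2*M+1:ℕ):ℝ)/2 = (k:ℝ) by ring]
    rw [h1, h2, h3]
    ring
  rw [Finset.sum_congr rfl (fun k _ => hterm k), ← Finset.mul_sum,
    ortho M a b ha hb] at hfold
  by_cases hba : b = a
  · subst hba
    rw [if_pos rfl] at hfold ⊢
    have h2M : 2*M = (2*M - 2*b) + 2*b := by omega
    have hval_eq : hval M b
        = (-(1:ℝ)/2^(2*b+1)) * (-(((2*b+1).factorial : ℝ) * 2^(2*M-2*b) / (((2*M-2*b).factorial : ℝ)))) / 2 := by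
      rw [hval, h2M, pow_add]
      have hfac : ((2*M-2*b).factorial : ℝ) ≠ 0 := fact_ne _
      simp only [Nat.add_sub_cancel]
      field_simp
      ring
    rw [hval_eq]
    linarith [hfold]
  · rw [if_neg hba] at hfold ⊢
    rw [mul_zero] at hfold
    linarith

lemma ip_phi_le (M a b : ℕ) (ha : a ≤ M) (hb : b ≤ a) :
    ∑ x ∈ Finset.Icc (1:ℕ) (M+1),
      ((((x:ℕ):ℝ) - 1/2)^2 * (1 / (((M+x).factorial : ℝ) * ((M+1-x).factorial : ℝ))))
        * (phi M a ((((x:ℕ):ℝ) - 1/2)^2) * phi M b ((((x:ℕ):ℝ) - 1/2)^2))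
    = if a = b then hval M a else 0 := by
  have hterm : ∀ x : ℕ,
      ((((x:ℕ):ℝ) - 1/2)^2 * (1 / (((M+x).factorial : ℝ) * ((M+1-x).factorial : ℝ))))
        * (phi M a ((((x:ℕ):ℝ) - 1/2)^2) * phi M b ((((x:ℕ):ℝ) - 1/2)^2))
      = ∑ b' ∈ range (b+1), cc M b b' *
          (((((x:ℕ):ℝ) - 1/2)^2)^(b'+1) * phi M a ((((x:ℕ):ℝ) - 1/2)^2)
            * (1 / (((M+x).factorial : ℝ) * ((M+1-x).factorial : ℝ)))) := by
    intro x
    conv_lhs => rw [show phi M b ((((x:ℕ):ℝ) - 1/2)^2)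
      = ∑ b' ∈ range (b+1), cc M b b' * ((((x:ℕ):ℝ) - 1/2)^2)^b' from rfl]
    rw [Finset.mul_sum, Finset.mul_sum]
    apply Finset.sum_congr rfl
    intro b' _
    ring
  rw [Finset.sum_congr rfl (fun x _ => hterm x), Finset.sum_comm]
  have hinner : ∀ b' ∈ range (b+1),
      ∑ x ∈ Finset.Icc (1:ℕ) (M+1), cc M b b' *
          (((((x:ℕ):ℝ) - 1/2)^2)^(b'+1) * phi M a ((((x:ℕ):ℝ) - 1/2)^2)
            * (1 / (((M+x).factorial : ℝ) * ((M+1-x).factorial : ℝ))))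
      = if b' = a then cc M b b' * hval M a else 0 := by
    intro b' hb'
    simp only [Finset.mem_range] at hb'
    rw [← Finset.mul_sum, ip_mono M a b' ha (by omega)]
    by_cases hc : b' = a
    · rw [if_pos hc, if_pos hc]
    · rw [if_neg hc, if_neg hc, mul_zero]
  rw [Finset.sum_congr rfl hinner]
  by_cases hba : a = b
  · subst hba
    rw [if_pos rfl, Finset.sum_ite_eq' (range (a+1)) a (fun b' => cc M a b' * hval M a),
      if_pos (by simp), cc_diag, one_mul]
  · rw [if_neg hba, Finset.sum_eq_zero]
    intro b' hb'
    simp only [Finset.mem_range] at hb'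
    rw [if_neg (by omega)]

lemma ip_phi (M a b : ℕ) (ha : a ≤ M) (hb : b ≤ M) :
    ∑ x ∈ Finset.Icc (1:ℕ) (M+1),
      ((((x:ℕ):ℝ) - 1/2)^2 * (1 / (((M+x).factorial : ℝ) * ((M+1-x).factorial : ℝ))))
        * (phi M a ((((x:ℕ):ℝ) - 1/2)^2) * phi M b ((((x:ℕ):ℝ) - 1/2)^2))
    = if a = b then hval M a else 0 := by
  rcases le_total b a with h | h
  · exact ip_phi_le M a b ha h
  · have := ip_phi_le M b a hb h
    rw [Finset.sum_congr rfl (fun x _ => by ring :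
      ∀ x ∈ Finset.Icc (1:ℕ) (M+1),
      ((((x:ℕ):ℝ) - 1/2)^2 * (1 / (((M+x).factorial : ℝ) * ((M+1-x).factorial : ℝ))))
        * (phi M a ((((x:ℕ):ℝ) - 1/2)^2) * phi M b ((((x:ℕ):ℝ) - 1/2)^2))
      = ((((x:ℕ):ℝ) - 1/2)^2 * (1 / (((M+x).factorial : ℝ) * ((M+1-x).factorial : ℝ))))
        * (phi M b ((((x:ℕ):ℝ) - 1/2)^2) * phi M a ((((x:ℕ):ℝ) - 1/2)^2))), this]
    by_cases hab : a = b
    · subst hab; simp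
    · rw [if_neg hab, if_neg (fun hh => hab hh.symm)]

lemma andreief (n : ℕ) {α : Type*} [Fintype α] [DecidableEq α] (w : α → ℝ) (f : ℕ → α → ℝ)
    (h : ℕ → ℝ)
    (horth : ∀ a b : ℕ, a < n → b < n → ∑ t : α, w t * (f a t * f b t) = if a = b then h a else 0) :
    ∑ x : Fin n → α, (∏ i, w (x i)) * (Matrix.of (fun i a : Fin n => f (a:ℕ) (x i))).det ^ 2
      = (n.factorial : ℝ) * ∏ j ∈ range n, h j := by
  classical
  have hdet : ∀ x : Fin n → α, (Matrix.of (fun i a : Fin n => f (a:ℕ) (x i))).det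
      = ∑ σ : Equiv.Perm (Fin n), ((Equiv.Perm.sign σ : ℤ) : ℝ) * ∏ i, f ((σ i : Fin n):ℕ) (x i) := by
    intro x
    rw [← Matrix.det_transpose, Matrix.det_apply']
    apply Finset.sum_congr rfl
    intro σ _
    rfl
  have step1 : ∀ x : Fin n → α,
      (∏ i, w (x i)) * (Matrix.of (fun i a : Fin n => f (a:ℕ) (x i))).det ^ 2
      = ∑ σ : Equiv.Perm (Fin n), ∑ τ : Equiv.Perm (Fin n),
          (((Equiv.Perm.sign σ : ℤ) : ℝ) * ((Equiv.Perm.sign τ : ℤ) : ℝ)) *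
            ∏ i, (w (x i) * (f ((σ i : Fin n):ℕ) (x i) * f ((τ i : Fin n):ℕ) (x i))) := by
    intro x
    rw [hdet, sq, Finset.sum_mul_sum, Finset.mul_sum]
    apply Finset.sum_congr rfl
    intro σ _
    rw [Finset.mul_sum]
    apply Finset.sum_congr rfl
    intro τ _
    rw [Finset.prod_mul_distrib, Finset.prod_mul_distrib]
    ring
  rw [Finset.sum_congr rfl (fun x _ => step1 x)]
  rw [Finset.sum_comm]
  have step2 : ∀ σ : Equiv.Perm (Fin n),
      ∑ x : Fin n → α, ∑ τ : Equiv.Perm (Fin n),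
        (((Equiv.Perm.sign σ : ℤ) : ℝ) * ((Equiv.Perm.sign τ : ℤ) : ℝ)) *
          ∏ i, (w (x i) * (f ((σ i : Fin n):ℕ) (x i) * f ((τ i : Fin n):ℕ) (x i)))
      = ∑ τ : Equiv.Perm (Fin n),
        (((Equiv.Perm.sign σ : ℤ) : ℝ) * ((Equiv.Perm.sign τ : ℤ) : ℝ)) *
          ∏ i, (∑ t : α, w t * (f ((σ i : Fin n):ℕ) t * f ((τ i : Fin n):ℕ) t)) := by
    intro σ
    rw [Finset.sum_comm]
    apply Finset.sum_congr rfl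
    intro τ _
    rw [← Finset.mul_sum]
    congr 1
    rw [Finset.prod_univ_sum (fun _ => (Finset.univ : Finset α))
      (fun i t => w t * (f ((σ i : Fin n):ℕ) t * f ((τ i : Fin n):ℕ) t))]
    rw [Fintype.piFinset_univ]
  rw [Finset.sum_congr rfl (fun σ _ => step2 σ)]
  have step3 : ∀ σ τ : Equiv.Perm (Fin n),
      ∏ i, (∑ t : α, w t * (f ((σ i : Fin n):ℕ) t * f ((τ i : Fin n):ℕ) t))
      = if σ = τ then ∏ i : Fin n, h ((σ i : Fin n):ℕ) else 0 := by
    intro σ τ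
    have hfac : ∀ i : Fin n, (∑ t : α, w t * (f ((σ i : Fin n):ℕ) t * f ((τ i : Fin n):ℕ) t))
        = if σ i = τ i then h ((σ i : Fin n):ℕ) else 0 := by
      intro i
      rw [horth _ _ (σ i).isLt (τ i).isLt]
      by_cases hc : σ i = τ i
      · rw [if_pos (by rw [hc]), if_pos hc]
      · rw [if_neg (fun hh => hc (Fin.val_injective hh)), if_neg hc]
    rw [Finset.prod_congr rfl (fun i _ => hfac i)]
    by_cases hστ : σ = τ
    · subst hστ
      rw [if_pos rfl]
      apply Finset.prod_congr rfl
      intro i _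
      rw [if_pos rfl]
    · rw [if_neg hστ]
      obtain ⟨i, hi⟩ : ∃ i, σ i ≠ τ i := by
        by_contra hcon
        push_neg at hcon
        exact hστ (Equiv.ext hcon)
      exact Finset.prod_eq_zero (Finset.mem_univ i) (if_neg hi)
  have step4 : ∀ σ : Equiv.Perm (Fin n),
      ∑ τ : Equiv.Perm (Fin n),
        (((Equiv.Perm.sign σ : ℤ) : ℝ) * ((Equiv.Perm.sign τ : ℤ) : ℝ)) *
          ∏ i, (∑ t : α, w t * (f ((σ i : Fin n):ℕ) t * f ((τ i : Fin n):ℕ) t))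
      = ∏ j ∈ range n, h j := by
    intro σ
    rw [Finset.sum_congr rfl (fun τ _ => by rw [step3 σ τ])]
    rw [Finset.sum_congr rfl (fun τ _ => by
      rw [mul_ite, mul_zero] :
      ∀ τ ∈ (Finset.univ : Finset (Equiv.Perm (Fin n))),
        (((Equiv.Perm.sign σ : ℤ) : ℝ) * ((Equiv.Perm.sign τ : ℤ) : ℝ)) *
          (if σ = τ then ∏ i : Fin n, h ((σ i : Fin n):ℕ) else 0)
        = if σ = τ then (((Equiv.Perm.sign σ : ℤ) : ℝ) * ((Equiv.Perm.sign τ : ℤ) : ℝ)) *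
            ∏ i : Fin n, h ((σ i : Fin n):ℕ) else 0)]
    rw [Finset.sum_ite_eq]
    rw [if_pos (Finset.mem_univ σ)]
    have hsgn : ((Equiv.Perm.sign σ : ℤ) : ℝ) * ((Equiv.Perm.sign σ : ℤ) : ℝ) = 1 := by
      have h2 : ((Equiv.Perm.sign σ) : ℤ) * ((Equiv.Perm.sign σ) : ℤ) = 1 := by
        rw [← Units.val_mul, Int.units_mul_self, Units.val_one]
      exact_mod_cast congrArg (fun z : ℤ => (z:ℝ)) h2
    rw [hsgn, one_mul]
    rw [Equiv.prod_comp σ (fun i : Fin n => h (i:ℕ))]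
    exact Fin.prod_univ_eq_prod_range (fun j => h j) n
  rw [Finset.sum_congr rfl (fun σ _ => step4 σ)]
  rw [Finset.sum_const, Finset.card_univ, Fintype.card_perm, Fintype.card_fin, nsmul_eq_mul]

lemma prod_ite_Ioi (n : ℕ) (i : Fin n) (g : Fin n → ℝ) :
    ∏ j : Fin n, (if i < j then g j else 1) = ∏ j ∈ Finset.Ioi i, g j := by
  rw [← Finset.prod_filter]
  congr 1
  ext j
  simp

lemma vdm_sq (n : ℕ) (v : Fin n → ℝ) :
    (∏ i : Fin n, ∏ j : Fin n, if i < j then v i - v j else 1)^2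
    = ((Matrix.vandermonde v).det)^2 := by
  rw [Matrix.det_vandermonde, ← Finset.prod_pow, ← Finset.prod_pow]
  apply Finset.prod_congr rfl
  intro i _
  rw [← Finset.prod_pow, ← Finset.prod_pow]
  have h1 : ∀ j, ((if i < j then v i - v j else 1) : ℝ)^2 = if i < j then (v i - v j)^2 else 1 := by
    intro j
    split <;> simp
  rw [Finset.prod_congr rfl (fun j _ => h1 j), prod_ite_Ioi n i (fun j => (v i - v j)^2)]
  apply Finset.prod_congr rfl
  intro j _
  ring

lemma vdm_to_phi (M n : ℕ) (v : Fin n → ℝ) :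
    (Matrix.vandermonde v).det = (Matrix.of (fun i a : Fin n => phi M (a:ℕ) (v i))).det := by
  have hGL : (Matrix.of (fun i a : Fin n => phi M (a:ℕ) (v i)))
      = (Matrix.vandermonde v) *
        (Matrix.of (fun b a : Fin n => if (b:ℕ) ≤ (a:ℕ) then cc M (a:ℕ) (b:ℕ) else 0)) := by
    ext i a
    rw [Matrix.mul_apply]
    simp only [Matrix.of_apply, Matrix.vandermonde_apply]
    rw [Fin.sum_univ_eq_sum_range (fun j => v i ^ j * (if j ≤ (a:ℕ) then cc M (a:ℕ) j else 0)) n]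
    rw [phi]
    rw [← Finset.sum_subset (Finset.range_subset_range.mpr (show (a:ℕ)+1 ≤ n from a.isLt)) ?_]
    · apply Finset.sum_congr rfl
      intro j hj
      simp only [Finset.mem_range] at hj
      rw [if_pos (by omega)]
      ring
    · intro j _ hj
      simp only [Finset.mem_range] at hj
      rw [if_neg (by omega), mul_zero]
  rw [hGL, Matrix.det_mul]
  have hL : (Matrix.of (fun b a : Fin n => if (b:ℕ) ≤ (a:ℕ) then cc M (a:ℕ) (b:ℕ) else 0)).det = 1 := by
    rw [Matrix.det_of_upperTriangular (by
      intro i j hij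
      simp only [Matrix.of_apply]
      have : (j:ℕ) < (i:ℕ) := hij
      rw [if_neg (by omega)])]
    apply Finset.prod_eq_one
    intro a _
    simp only [Matrix.of_apply]
    rw [if_pos le_rfl, cc_diag]
  rw [hL, mul_one]

end Stmt17


open Stmt17 in

/-- For integers `M ≥ 0` and `1 ≤ n ≤ M+1`:
`∑_{x₁,…,x_n=1}^{M+1} ∏ᵢ (xᵢ-1/2)²/((M+xᵢ)!(M+1-xᵢ)!) ⬝
  (∏_{i<j}((xᵢ-1/2)² - (xⱼ-1/2)²))²
  = n! ⬝ 2^{2Mn} ⬝ ∏_{j=0}^{n-1} (2j+1)!/(2^{4j+2}(2M-2j)!)`. -/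
theorem stmt_17 (M n : ℕ) (hn : 1 ≤ n) (hnM : n ≤ M + 1) :
    ∑ x : Fin n → {t : ℕ // t ∈ Finset.Icc 1 (M + 1)},
      (∏ i : Fin n,
        ((((x i : ℕ) : ℝ) - 1 / 2) ^ 2 /
          ((Nat.factorial (M + (x i : ℕ)) * Nat.factorial (M + 1 - (x i : ℕ)) : ℕ) : ℝ))) *
        (∏ i : Fin n, ∏ j : Fin n, if i < j then
          (((x i : ℕ) : ℝ) - 1 / 2) ^ 2 - (((x j : ℕ) : ℝ) - 1 / 2) ^ 2 else 1) ^ 2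
    = (Nat.factorial n : ℝ) * (2 : ℝ) ^ (2 * M * n) *
        ∏ j ∈ Finset.range n,
          ((Nat.factorial (2 * j + 1) : ℝ) /
            ((2 : ℝ) ^ (4 * j + 2) * (Nat.factorial (2 * M - 2 * j) : ℝ))) := by
  classical
  have horth : ∀ a b : ℕ, a < n → b < n →
      ∑ t : {t : ℕ // t ∈ Finset.Icc 1 (M + 1)},
        ((((t:ℕ):ℝ) - 1/2)^2 / ((((M + (t:ℕ)).factorial * (M+1-(t:ℕ)).factorial : ℕ)):ℝ)) *
          (phi M a ((((t:ℕ):ℝ) - 1/2)^2) * phi M b ((((t:ℕ):ℝ) - 1/2)^2))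
      = if a = b then hval M a else 0 := by
    intro a b ha hb
    rw [Finset.sum_coe_sort (Finset.Icc 1 (M+1)) (fun z : ℕ =>
      (((z:ℝ) - 1/2)^2 / ((((M + z).factorial * (M+1-z).factorial : ℕ)):ℝ)) *
        (phi M a (((z:ℝ) - 1/2)^2) * phi M b (((z:ℝ) - 1/2)^2)))]
    rw [← ip_phi M a b (by omega) (by omega)]
    apply Finset.sum_congr rfl
    intro z _
    rw [Nat.cast_mul]
    ring
  have hpt : ∀ x : Fin n → {t : ℕ // t ∈ Finset.Icc 1 (M + 1)},
      (∏ i : Fin n,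
        ((((x i : ℕ) : ℝ) - 1 / 2) ^ 2 /
          ((Nat.factorial (M + (x i : ℕ)) * Nat.factorial (M + 1 - (x i : ℕ)) : ℕ) : ℝ))) *
        (∏ i : Fin n, ∏ j : Fin n, if i < j then
          (((x i : ℕ) : ℝ) - 1 / 2) ^ 2 - (((x j : ℕ) : ℝ) - 1 / 2) ^ 2 else 1) ^ 2
      = (∏ i : Fin n,
        ((((x i : ℕ) : ℝ) - 1 / 2) ^ 2 /
          ((Nat.factorial (M + (x i : ℕ)) * Nat.factorial (M + 1 - (x i : ℕ)) : ℕ) : ℝ))) *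
        (Matrix.of (fun i a : Fin n => phi M (a:ℕ) ((((x i : ℕ):ℝ) - 1/2)^2))).det ^ 2 := by
    intro x
    congr 1
    rw [← vdm_to_phi M n (fun i => (((x i : ℕ):ℝ) - 1/2)^2)]
    exact vdm_sq n (fun i => (((x i : ℕ):ℝ) - 1/2)^2)
  rw [Finset.sum_congr rfl (fun x _ => hpt x)]
  refine (andreief n
    (fun t : {t : ℕ // t ∈ Finset.Icc 1 (M + 1)} =>
      ((((t:ℕ):ℝ) - 1/2)^2 / ((((M + (t:ℕ)).factorial * (M+1-(t:ℕ)).factorial : ℕ)):ℝ)))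
    (fun a t => phi M a ((((t:ℕ):ℝ) - 1/2)^2)) (hval M) horth).trans ?_
  simp only [hval]
  rw [Finset.prod_mul_distrib, Finset.prod_const, Finset.card_range, ← pow_mul]
  ring
end
end

section
/- For every real c with 0 < c ≤ 1/2, the integral ∫_{−c}^{c} u · log(1+2u) / √(c² − u²) du equals (π/2)(1 − √(1 − 4c²)). -/
open Real MeasureTheory Set intervalIntegral Filter

namespace Stmt18Aux

lemma subst_step (c : ℝ) (hc0 : 0 < c) :
    ∫ u in (-c)..c, u * Real.log (1 + 2 * u) / Real.sqrt (c ^ 2 - u ^ 2)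
      = ∫ θ in (-(π/2))..(π/2), c * Real.sin θ * Real.log (1 + 2 * (c * Real.sin θ)) := by
  have hπ : -(π/2) ≤ (π/2) := by linarith [pi_pos]
  rw [intervalIntegral.integral_of_le (by linarith : -c ≤ c),
      intervalIntegral.integral_of_le hπ,
      MeasureTheory.integral_Ioc_eq_integral_Ioo,
      MeasureTheory.integral_Ioc_eq_integral_Ioo]
  have himg : (fun θ : ℝ => c * Real.sin θ) '' Ioo (-(π/2)) (π/2) = Ioo (-c) c := by
    ext u
    constructor
    · rintro ⟨θ, hθ, rfl⟩
      have h1 : Real.sin θ < 1 := by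
        have := Real.strictMonoOn_sin (Set.mem_Icc.2 ⟨hθ.1.le, hθ.2.le⟩)
          (Set.mem_Icc.2 ⟨by linarith [hθ.1], le_refl (π/2)⟩) hθ.2
        simpa using this
      have h2 : -1 < Real.sin θ := by
        have := Real.strictMonoOn_sin (Set.mem_Icc.2 ⟨le_refl (-(π/2)), by linarith [hθ.2]⟩)
          (Set.mem_Icc.2 ⟨hθ.1.le, hθ.2.le⟩) hθ.1
        simpa using this
      simp only
      constructor <;> nlinarith
    · intro hu
      refine ⟨Real.arcsin (u / c), ⟨?_, ?_⟩, ?_⟩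
      · exact Real.neg_pi_div_two_lt_arcsin.2 (by rw [neg_lt, ← neg_div]; exact (div_lt_one hc0).2 (by linarith [hu.1]))
      · exact Real.arcsin_lt_pi_div_two.2 ((div_lt_one hc0).2 hu.2)
      · show c * Real.sin (Real.arcsin (u / c)) = u
        rw [Real.sin_arcsin (by rw [neg_le, ← neg_div]; exact (div_le_one hc0).2 (by linarith [hu.1])) ((div_le_one hc0).2 hu.2.le)]
        field_simp
  rw [← himg]
  rw [MeasureTheory.integral_image_eq_integral_abs_deriv_smul measurableSet_Ioo
      (fun θ _ => (((Real.hasDerivAt_sin θ).const_mul c).hasDerivWithinAt))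
      (fun θ₁ h1 θ₂ h2 heq => Real.strictMonoOn_sin.injOn
        (Set.mem_Icc.2 ⟨h1.1.le, h1.2.le⟩) (Set.mem_Icc.2 ⟨h2.1.le, h2.2.le⟩)
        (mul_left_cancel₀ hc0.ne' heq))]
  refine setIntegral_congr_fun measurableSet_Ioo (fun θ hθ => ?_)
  have hcosθ : 0 < Real.cos θ := Real.cos_pos_of_mem_Ioo hθ
  have hsq : Real.sqrt (c ^ 2 - (c * Real.sin θ) ^ 2) = c * Real.cos θ := by
    rw [show c ^ 2 - (c * Real.sin θ) ^ 2 = (c * Real.cos θ) ^ 2 by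
      nlinarith [Real.sin_sq_add_cos_sq θ]]
    exact Real.sqrt_sq (by positivity)
  rw [smul_eq_mul, hsq, abs_of_pos (by positivity : (0:ℝ) < c * Real.cos θ)]
  field_simp

noncomputable def Hlt (c θ : ℝ) : ℝ :=
  -(c * Real.cos θ * Real.log (1 + 2 * (c * Real.sin θ))) + c * Real.cos θ + θ / 2
    - Real.sqrt (1 - 4 * c ^ 2) *
      Real.arctan ((Real.sin θ / (1 + Real.cos θ) + 2 * c) / Real.sqrt (1 - 4 * c ^ 2))

lemma Hlt_hasDerivAt (c : ℝ) (hc0 : 0 < c) (hc : c < 1 / 2) (θ : ℝ)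
    (hcos : -1 < Real.cos θ) :
    HasDerivAt (Hlt c) (c * Real.sin θ * Real.log (1 + 2 * (c * Real.sin θ))) θ := by
  have hkpos : (0:ℝ) < 1 - 4 * c ^ 2 := by nlinarith
  have hk2 : Real.sqrt (1 - 4 * c ^ 2) ^ 2 = 1 - 4 * c ^ 2 := Real.sq_sqrt hkpos.le
  have hk : 0 < Real.sqrt (1 - 4 * c ^ 2) := Real.sqrt_pos.2 hkpos
  set k := Real.sqrt (1 - 4 * c ^ 2) with hkdef
  have hs1 : -1 ≤ Real.sin θ := Real.neg_one_le_sin θ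
  have hs1' : Real.sin θ ≤ 1 := Real.sin_le_one θ
  have hlogpos : 0 < 1 + 2 * (c * Real.sin θ) := by nlinarith
  have hcos' : (0:ℝ) < 1 + Real.cos θ := by linarith
  have h1 : HasDerivAt (fun θ : ℝ => 1 + 2 * (c * Real.sin θ)) (2 * (c * Real.cos θ)) θ := by
    simpa using (((Real.hasDerivAt_sin θ).const_mul c).const_mul 2).const_add 1
  have hL : HasDerivAt (fun θ : ℝ => Real.log (1 + 2 * (c * Real.sin θ)))
      (2 * (c * Real.cos θ) / (1 + 2 * (c * Real.sin θ))) θ := h1.log hlogpos.ne'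
  have hA : HasDerivAt (fun θ : ℝ => -(c * Real.cos θ * Real.log (1 + 2 * (c * Real.sin θ))))
      (-(c * (-Real.sin θ) * Real.log (1 + 2 * (c * Real.sin θ))
        + c * Real.cos θ * (2 * (c * Real.cos θ) / (1 + 2 * (c * Real.sin θ))))) θ :=
    (((Real.hasDerivAt_cos θ).const_mul c).mul hL).neg
  have hB : HasDerivAt (fun θ : ℝ => c * Real.cos θ) (c * (-Real.sin θ)) θ :=
    (Real.hasDerivAt_cos θ).const_mul c
  have hC : HasDerivAt (fun θ : ℝ => θ / 2) (1 / 2) θ := by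
    simpa using (hasDerivAt_id θ).div_const 2
  have hT : HasDerivAt (fun θ : ℝ => Real.sin θ / (1 + Real.cos θ))
      ((Real.cos θ * (1 + Real.cos θ) - Real.sin θ * (-Real.sin θ)) / (1 + Real.cos θ) ^ 2) θ := by
    have := (Real.hasDerivAt_sin θ).div ((Real.hasDerivAt_cos θ).const_add 1) hcos'.ne'
    have h2 : HasDerivAt (fun θ : ℝ => Real.sin θ / (1 + Real.cos θ)) _ θ := this
    convert h2 using 1
  have harg : HasDerivAt (fun θ : ℝ => (Real.sin θ / (1 + Real.cos θ) + 2 * c) / k)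
      (((Real.cos θ * (1 + Real.cos θ) - Real.sin θ * (-Real.sin θ)) / (1 + Real.cos θ) ^ 2) / k)
      θ := (hT.add_const (2 * c)).div_const k
  have hArc : HasDerivAt
      (fun θ : ℝ => Real.arctan ((Real.sin θ / (1 + Real.cos θ) + 2 * c) / k))
      (1 / (1 + ((Real.sin θ / (1 + Real.cos θ) + 2 * c) / k) ^ 2) *
        (((Real.cos θ * (1 + Real.cos θ) - Real.sin θ * (-Real.sin θ)) / (1 + Real.cos θ) ^ 2) / k))
      θ := harg.arctan
  have hsum := ((hA.add hB).add hC).sub (hArc.const_mul k)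
  have : HasDerivAt (Hlt c)
      (-(c * (-Real.sin θ) * Real.log (1 + 2 * (c * Real.sin θ))
        + c * Real.cos θ * (2 * (c * Real.cos θ) / (1 + 2 * (c * Real.sin θ))))
       + c * (-Real.sin θ) + 1 / 2
       - k * (1 / (1 + ((Real.sin θ / (1 + Real.cos θ) + 2 * c) / k) ^ 2) *
        (((Real.cos θ * (1 + Real.cos θ) - Real.sin θ * (-Real.sin θ)) / (1 + Real.cos θ) ^ 2) / k)))
      θ := hsum
  convert this using 1
  set s := Real.sin θ
  set co := Real.cos θ
  set L := Real.log (1 + 2 * (c * s)) with hL'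
  have pyth : s ^ 2 + co ^ 2 = 1 := Real.sin_sq_add_cos_sq θ
  have e1 : (co * (1 + co) - s * (-s)) / (1 + co) ^ 2 = 1 / (1 + co) := by
    rw [div_eq_div_iff (by positivity) hcos'.ne']
    linear_combination (1 + co) * pyth
  have e2a : (s / (1 + co) + 2 * c) / k = (s + 2 * c * (1 + co)) / ((1 + co) * k) := by
    field_simp
  have e2b : (s + 2 * c * (1 + co)) ^ 2 = 2 * (1 + 2 * (c * s)) * (1 + co) - (1 + co) ^ 2 * k ^ 2 := by
    linear_combination (1 + co) ^ 2 * hk2 + pyth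
  have e2 : 1 + ((s / (1 + co) + 2 * c) / k) ^ 2 = 2 * (1 + 2 * (c * s)) / ((1 + co) * k ^ 2) := by
    rw [e2a, div_pow, e2b]
    rw [mul_pow]
    field_simp
    ring
  rw [e1, e2]
  have e3 : k * (1 / (2 * (1 + 2 * (c * s)) / ((1 + co) * k ^ 2)) * ((1 / (1 + co)) / k))
      = (1 - 4 * c ^ 2) / (2 * (1 + 2 * (c * s))) := by
    rw [← hk2]
    field_simp
  rw [e3]
  have hne : 1 + 2 * (c * s) ≠ 0 := hlogpos.ne'
  have hq : c * co * (2 * (c * co) / (1 + 2 * (c * s))) = (2 * c ^ 2 * co ^ 2) / (1 + 2 * (c * s)) := by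
    ring
  have hr : (1 - 4 * c ^ 2) / (2 * (1 + 2 * (c * s))) = ((1 - 4 * c ^ 2) / 2) / (1 + 2 * (c * s)) := by
    rw [div_div]
  have hD : (2 * c ^ 2 * co ^ 2) / (1 + 2 * (c * s)) + ((1 - 4 * c ^ 2) / 2) / (1 + 2 * (c * s))
      = 1 / 2 - c * s := by
    rw [← add_div, div_eq_iff hne]
    linear_combination 2 * c ^ 2 * pyth
  rw [hq, hr]
  linarith

lemma integral_theta_lt (c : ℝ) (hc0 : 0 < c) (hc : c < 1 / 2) :
    ∫ θ in (-(π/2))..(π/2), c * Real.sin θ * Real.log (1 + 2 * (c * Real.sin θ))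
      = π / 2 * (1 - Real.sqrt (1 - 4 * c ^ 2)) := by
  have hπ := Real.pi_pos
  have hkpos : (0:ℝ) < 1 - 4 * c ^ 2 := by nlinarith
  have hk2 : Real.sqrt (1 - 4 * c ^ 2) ^ 2 = 1 - 4 * c ^ 2 := Real.sq_sqrt hkpos.le
  have hk : 0 < Real.sqrt (1 - 4 * c ^ 2) := Real.sqrt_pos.2 hkpos
  set k := Real.sqrt (1 - 4 * c ^ 2) with hkdef
  have hcont : Continuous (fun θ : ℝ => c * Real.sin θ * Real.log (1 + 2 * (c * Real.sin θ))) := by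
    refine (continuous_const.mul Real.continuous_sin).mul (Continuous.log ?_ ?_)
    · exact continuous_const.add (continuous_const.mul (continuous_const.mul Real.continuous_sin))
    · intro θ
      have := Real.neg_one_le_sin θ
      nlinarith
  rw [intervalIntegral.integral_eq_sub_of_hasDerivAt
      (f := Hlt c)
      (fun θ hθ => by
        have hmem : θ ∈ Icc (-(π/2)) (π/2) := by
          rwa [Set.uIcc_of_le (by linarith : -(π/2) ≤ π/2)] at hθ
        have hcos : (0:ℝ) ≤ Real.cos θ := Real.cos_nonneg_of_mem_Icc hmem
        exact Hlt_hasDerivAt c hc0 hc θ (by linarith))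
      (hcont.intervalIntegrable _ _)]
  have hend1 : Hlt c (π/2) = π/4 - k * Real.arctan ((1 + 2*c)/k) := by
    unfold Hlt
    rw [Real.sin_pi_div_two, Real.cos_pi_div_two]
    norm_num
    ring
  have hend2 : Hlt c (-(π/2)) = -(π/4) - k * Real.arctan ((-(1) + 2*c)/k) := by
    unfold Hlt
    rw [Real.sin_neg, Real.cos_neg, Real.sin_pi_div_two, Real.cos_pi_div_two]
    norm_num
    ring
  have hinv : ((1 + 2*c)/k)⁻¹ = (1 - 2*c)/k := by
    rw [inv_div, div_eq_div_iff (by linarith) hk.ne']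
    nlinarith [hk2]
  have harc : Real.arctan ((1 - 2*c)/k) = π/2 - Real.arctan ((1 + 2*c)/k) := by
    rw [← hinv]
    exact Real.arctan_inv_of_pos (by positivity)
  have hneg : Real.arctan ((-(1) + 2*c)/k) = -Real.arctan ((1 - 2*c)/k) := by
    rw [← Real.arctan_neg]
    ring_nf
  rw [hend1, hend2, hneg, harc]
  ring

lemma absLog_le (y : ℝ) (h0 : 0 < y) (h2 : y ≤ 2) :
    |Real.log y| ≤ 4 / Real.sqrt (Real.sqrt y) := by
  set z := Real.sqrt (Real.sqrt y) with hz
  have hz0 : 0 < z := Real.sqrt_pos.2 (Real.sqrt_pos.2 h0)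
  have hz4 : z ^ 2 = Real.sqrt y := Real.sq_sqrt (Real.sqrt_nonneg y)
  have hy : (z ^ 2) ^ 2 = y := by rw [hz4]; exact Real.sq_sqrt h0.le
  have hlog : Real.log y = 4 * Real.log z := by
    rw [← hy, ← pow_mul]
    rw [Real.log_pow]
    norm_num
  have hzle : z ≤ 6 / 5 := by
    by_contra hgt
    push_neg at hgt
    have ha : (36/25 : ℝ) < z ^ 2 := by nlinarith
    have hb : (1296/625 : ℝ) < (z ^ 2) ^ 2 := by nlinarith
    rw [hy] at hb
    linarith
  have key : |Real.log z| ≤ 1 / z := by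
    rcases le_or_gt z 1 with h | h
    · rw [abs_of_nonpos (Real.log_nonpos hz0.le h)]
      have h1 := Real.log_le_sub_one_of_pos (show (0:ℝ) < z⁻¹ by positivity)
      rw [Real.log_inv] at h1
      rw [one_div]
      linarith
    · rw [abs_of_nonneg (Real.log_nonneg h.le)]
      have h1 := Real.log_le_sub_one_of_pos hz0
      have h2' : (5:ℝ) / 6 ≤ 1 / z := by
        rw [le_div_iff₀ hz0]; linarith
      linarith
  rw [hlog, abs_mul, abs_of_nonneg (by norm_num : (0:ℝ) ≤ (4:ℝ))]
  calc (4:ℝ) * |Real.log z| ≤ 4 * (1 / z) := by linarith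
    _ = 4 / z := by ring

lemma cos_log_bound (θ : ℝ) :
    ‖Real.cos θ * Real.log (1 + Real.sin θ)‖ ≤
      4 * Real.sqrt 2 * Real.sqrt (Real.sqrt (1 + Real.sin θ)) := by
  set y := 1 + Real.sin θ with hydef
  have h0 : 0 ≤ y := by have := Real.neg_one_le_sin θ; simp [hydef]; linarith
  have h2 : y ≤ 2 := by have := Real.sin_le_one θ; simp [hydef]; linarith
  rcases eq_or_lt_of_le h0 with h | h
  · rw [← h]
    simp [Real.log_zero]
  · have hcos2 : Real.cos θ ^ 2 ≤ 2 * y := by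
      have := Real.sin_sq_add_cos_sq θ
      have := Real.sin_le_one θ
      simp only [hydef]
      nlinarith
    have hcosabs : |Real.cos θ| ≤ Real.sqrt 2 * Real.sqrt y := by
      rw [← Real.sqrt_sq_eq_abs, ← Real.sqrt_mul (by norm_num : (0:ℝ) ≤ 2)]
      exact Real.sqrt_le_sqrt hcos2
    have hlog := absLog_le y h h2
    have hssy : Real.sqrt y = Real.sqrt (Real.sqrt y) * Real.sqrt (Real.sqrt y) :=
      (Real.mul_self_sqrt (Real.sqrt_nonneg y)).symm
    have hsspos : 0 < Real.sqrt (Real.sqrt y) := Real.sqrt_pos.2 (Real.sqrt_pos.2 h)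
    rw [Real.norm_eq_abs, abs_mul]
    calc |Real.cos θ| * |Real.log y|
        ≤ (Real.sqrt 2 * Real.sqrt y) * (4 / Real.sqrt (Real.sqrt y)) := by
          apply mul_le_mul hcosabs hlog (abs_nonneg _) (by positivity)
      _ = 4 * Real.sqrt 2 * (Real.sqrt y / Real.sqrt (Real.sqrt y)) := by ring
      _ = 4 * Real.sqrt 2 * Real.sqrt (Real.sqrt y) := by
          have hdiv : Real.sqrt y / Real.sqrt (Real.sqrt y) = Real.sqrt (Real.sqrt y) := by
            rw [eq_comm, eq_div_iff hsspos.ne']; exact hssy.symm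
          rw [hdiv]

lemma jordan_bound (θ : ℝ) (h1 : -(π/2) < θ) (h2 : θ ≤ π/2) :
    2 / π ^ 2 * (θ + π/2) ^ 2 ≤ 1 + Real.sin θ := by
  have hπ := Real.pi_pos
  set x := θ + π/2 with hx
  have hx0 : 0 < x := by simp [hx]; linarith
  have hxπ : x ≤ π := by simp [hx]; linarith
  have hcos : Real.cos x = -Real.sin θ := by
    rw [hx, Real.cos_add_pi_div_two]
  have hsq : Real.sin (x/2) ^ 2 = 1/2 - Real.cos x / 2 := by
    have := Real.sin_sq_eq_half_sub (x/2)
    rwa [show 2 * (x/2) = x by ring] at this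
  have hjord : x / π ≤ Real.sin (x/2) := by
    have := Real.mul_le_sin (x := x/2) (by linarith) (by linarith)
    calc x / π = 2/π * (x/2) := by field_simp
      _ ≤ Real.sin (x/2) := this
  have hx2 : (x/π) ^ 2 ≤ Real.sin (x/2) ^ 2 := by
    apply pow_le_pow_left₀ (by positivity) hjord
  rw [hsq, hcos] at hx2
  have : (x/π) ^ 2 = x^2 / π^2 := by ring
  rw [this] at hx2
  rw [div_le_iff₀ (by positivity : (0:ℝ) < π^2)] at hx2
  rw [div_mul_eq_mul_div, div_le_iff₀ (by positivity : (0:ℝ) < π^2)]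
  ring_nf
  ring_nf at hx2
  linarith

lemma integrable_half :
    IntervalIntegrable (fun θ : ℝ => Real.sin θ * Real.log (1 + Real.sin θ) / 2)
      volume (-(π/2)) (π/2) := by
  have hπ := Real.pi_pos
  set K := 4 / Real.sqrt (Real.sqrt (2 / π ^ 2)) with hK
  have hKpos : 0 < K := by
    rw [hK]
    positivity
  have base : IntervalIntegrable (fun x : ℝ => x ^ (-(1/2) : ℝ)) volume 0 π :=
    intervalIntegral.intervalIntegrable_rpow' (by norm_num)
  have shift := (base.comp_sub_right (-(π/2)))
  have shift' : IntervalIntegrable (fun x : ℝ => (x + π/2) ^ (-(1/2) : ℝ)) volume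
      (-(π/2)) (π/2) := by
    have h0 : (0:ℝ) + -(π/2) = -(π/2) := by ring
    have h1 : π + -(π/2) = π/2 := by ring
    rw [h0, h1] at shift
    convert shift using 2 with x
    ring_nf
  have hg : IntervalIntegrable (fun x : ℝ => K * (x + π/2) ^ (-(1/2) : ℝ)) volume
      (-(π/2)) (π/2) := shift'.const_mul K
  apply hg.mono_fun'
  · apply Measurable.aestronglyMeasurable
    apply Measurable.div_const
    exact Real.measurable_sin.mul
      (Real.measurable_log.comp (measurable_const.add Real.measurable_sin))
  · rw [Set.uIoc_of_le (by linarith : -(π/2) ≤ π/2)]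
    refine Filter.eventually_of_mem (self_mem_ae_restrict measurableSet_Ioc) ?_
    intro θ hθ
    set x := θ + π/2 with hxdef
    have hx0 : 0 < x := by simp [hxdef]; linarith [hθ.1]
    have hy0 : 0 < 1 + Real.sin θ :=
      lt_of_lt_of_le (by positivity) (jordan_bound θ hθ.1 hθ.2)
    have hy2 : 1 + Real.sin θ ≤ 2 := by linarith [Real.sin_le_one θ]
    have hlog := absLog_le _ hy0 hy2
    -- √√ monotone chain
    have hmono : Real.sqrt (Real.sqrt (2/π^2 * x^2)) ≤ Real.sqrt (Real.sqrt (1 + Real.sin θ)) :=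
      Real.sqrt_le_sqrt (Real.sqrt_le_sqrt (jordan_bound θ hθ.1 hθ.2))
    have hval : Real.sqrt (Real.sqrt (2/π^2 * x^2)) =
        Real.sqrt (Real.sqrt (2/π^2)) * Real.sqrt x := by
      rw [Real.sqrt_mul (by positivity : (0:ℝ) ≤ 2/π^2), Real.sqrt_sq hx0.le,
          Real.sqrt_mul (Real.sqrt_nonneg _)]
    have hpos1 : 0 < Real.sqrt (Real.sqrt (2/π^2 * x^2)) := by
      rw [hval]; positivity
    have hbound : |Real.log (1 + Real.sin θ)| ≤ K * (Real.sqrt x)⁻¹ := by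
      calc |Real.log (1 + Real.sin θ)| ≤ 4 / Real.sqrt (Real.sqrt (1 + Real.sin θ)) := hlog
        _ ≤ 4 / Real.sqrt (Real.sqrt (2/π^2 * x^2)) := by
            apply div_le_div_of_nonneg_left (by norm_num) hpos1 hmono
        _ = K * (Real.sqrt x)⁻¹ := by
            rw [hval, hK]
            field_simp
    have hrpow : x ^ (-(1/2) : ℝ) = (Real.sqrt x)⁻¹ := by
      rw [Real.rpow_neg hx0.le, Real.sqrt_eq_rpow]
    simp only [Real.norm_eq_abs]
    rw [hrpow]
    calc |Real.sin θ * Real.log (1 + Real.sin θ) / 2|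
        ≤ |Real.log (1 + Real.sin θ)| := by
          rw [abs_div, abs_mul]
          have h1 : |Real.sin θ| ≤ 1 := Real.abs_sin_le_one θ
          have h2 : (0:ℝ) ≤ |Real.log (1 + Real.sin θ)| := abs_nonneg _
          calc |Real.sin θ| * |Real.log (1 + Real.sin θ)| / |(2:ℝ)|
              ≤ 1 * |Real.log (1 + Real.sin θ)| / 1 := by
                apply div_le_div₀ (by positivity) (by nlinarith) (by norm_num) (by norm_num [abs_of_nonneg])
            _ = |Real.log (1 + Real.sin θ)| := by ring
      _ ≤ K * (Real.sqrt x)⁻¹ := hbound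

noncomputable def H1 (θ : ℝ) : ℝ :=
  (-(Real.cos θ * Real.log (1 + Real.sin θ)) + Real.cos θ + θ) / 2

lemma H1_continuousOn : ContinuousOn H1 (Icc (-(π/2)) (π/2)) := by
  have hπ := Real.pi_pos
  have hrest : ContinuousOn (fun θ : ℝ => Real.cos θ * Real.log (1 + Real.sin θ))
      (Icc (-(π/2)) (π/2)) := by
    intro θ hθ
    rcases eq_or_lt_of_le hθ.1 with heq | hlt
    · -- endpoint θ = -(π/2)
      rw [← heq]
      have hval : Real.cos (-(π/2)) * Real.log (1 + Real.sin (-(π/2))) = 0 := by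
        simp [Real.cos_pi_div_two]
      unfold ContinuousWithinAt
      have hval' : (fun θ : ℝ => Real.cos θ * Real.log (1 + Real.sin θ)) (-(π/2)) = 0 := hval
      rw [hval']
      apply squeeze_zero_norm cos_log_bound
      have hB : Continuous (fun θ : ℝ =>
          4 * Real.sqrt 2 * Real.sqrt (Real.sqrt (1 + Real.sin θ))) := by
        continuity
      have hB0 : 4 * Real.sqrt 2 * Real.sqrt (Real.sqrt (1 + Real.sin (-(π/2)))) = 0 := by
        simp
      have := hB.tendsto (-(π/2))
      rw [hB0] at this
      exact this.mono_left nhdsWithin_le_nhds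
    · -- interior-ish: sin θ > -1
      have hsin : -1 < Real.sin θ := by
        have := Real.strictMonoOn_sin (Set.mem_Icc.2 ⟨le_refl (-(π/2)), by linarith [hθ.2]⟩)
          (Set.mem_Icc.2 ⟨hθ.1, hθ.2⟩) hlt
        simpa using this
      apply ContinuousAt.continuousWithinAt
      apply ContinuousAt.mul (Real.continuous_cos.continuousAt)
      exact (Real.continuousAt_log (by linarith)).comp
        ((continuous_const.add Real.continuous_sin).continuousAt)
  apply ContinuousOn.div_const
  exact (hrest.neg.add Real.continuous_cos.continuousOn).add continuousOn_id

lemma H1_hasDerivAt (θ : ℝ) (hθ : θ ∈ Ioo (-(π/2)) (π/2)) :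
    HasDerivAt H1 (Real.sin θ * Real.log (1 + Real.sin θ) / 2) θ := by
  have hsin : -1 < Real.sin θ := by
    have := Real.strictMonoOn_sin (Set.mem_Icc.2 ⟨le_refl (-(π/2)), by linarith [hθ.1, hθ.2]⟩)
      (Set.mem_Icc.2 ⟨hθ.1.le, hθ.2.le⟩) hθ.1
    simpa using this
  have hpos : 0 < 1 + Real.sin θ := by linarith
  have h1 : HasDerivAt (fun θ : ℝ => 1 + Real.sin θ) (Real.cos θ) θ := by
    simpa using (Real.hasDerivAt_sin θ).const_add 1
  have hL : HasDerivAt (fun θ : ℝ => Real.log (1 + Real.sin θ))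
      (Real.cos θ / (1 + Real.sin θ)) θ := h1.log hpos.ne'
  have hsum : HasDerivAt (fun θ : ℝ =>
      -(Real.cos θ * Real.log (1 + Real.sin θ)) + Real.cos θ + θ)
      (-((-Real.sin θ) * Real.log (1 + Real.sin θ)
        + Real.cos θ * (Real.cos θ / (1 + Real.sin θ))) + (-Real.sin θ) + 1) θ := by
    exact (((Real.hasDerivAt_cos θ).mul hL).neg.add (Real.hasDerivAt_cos θ)).add (hasDerivAt_id θ)
  have := hsum.div_const 2
  convert this using 1 <;> try rfl
  have pyth := Real.sin_sq_add_cos_sq θ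
  field_simp
  linear_combination pyth

lemma integral_theta_half :
    ∫ θ in (-(π/2))..(π/2), Real.sin θ * Real.log (1 + Real.sin θ) / 2 = π / 2 := by
  have hπ := Real.pi_pos
  rw [intervalIntegral.integral_eq_sub_of_hasDeriv_right_of_le (by linarith)
      H1_continuousOn
      (fun θ hθ => (H1_hasDerivAt θ hθ).hasDerivWithinAt)
      integrable_half]
  have h1 : H1 (π/2) = π/4 := by
    unfold H1
    rw [Real.cos_pi_div_two]
    ring
  have h2 : H1 (-(π/2)) = -(π/4) := by
    unfold H1
    rw [Real.cos_neg, Real.cos_pi_div_two]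
    ring
  rw [h1, h2]
  ring

end Stmt18Aux

/-- For every real `c` with `0 < c ≤ 1/2`,
`∫_{-c}^{c} u log(1+2u)/√(c²-u²) du = (π/2)(1 - √(1-4c²))`. -/
theorem stmt_18 (c : ℝ) (hc0 : 0 < c) (hc : c ≤ 1 / 2) :
    ∫ u in (-c)..c, u * Real.log (1 + 2 * u) / Real.sqrt (c ^ 2 - u ^ 2)
      = Real.pi / 2 * (1 - Real.sqrt (1 - 4 * c ^ 2)) := by
  rw [Stmt18Aux.subst_step c hc0]
  rcases lt_or_eq_of_le hc with hlt | heq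
  · exact Stmt18Aux.integral_theta_lt c hc0 hlt
  · subst heq
    have hcongr : ∀ θ : ℝ,
        (1/2 : ℝ) * Real.sin θ * Real.log (1 + 2 * ((1/2) * Real.sin θ))
          = Real.sin θ * Real.log (1 + Real.sin θ) / 2 := by
      intro θ
      rw [show (1:ℝ) + 2 * ((1/2) * Real.sin θ) = 1 + Real.sin θ by ring]
      ring
    rw [intervalIntegral.integral_congr (g := fun θ => Real.sin θ * Real.log (1 + Real.sin θ) / 2)
      (fun θ _ => hcongr θ)]
    rw [Stmt18Aux.integral_theta_half]
    norm_num
end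

section
/- For every real a with 0 < a < 1, the integral ∫_{−a}^{a} t · log((1+t)/(1−t)) / √(a² − t²) dt equals 2π(1 − √(1 − a²)). -/
set_option maxHeartbeats 1000000

open Real Set MeasureTheory intervalIntegral

/-- For every real `a` with `0 < a < 1`,
`∫_{-a}^{a} t log((1+t)/(1-t))/√(a²-t²) dt = 2π(1 - √(1-a²))`. -/
theorem stmt_19 (a : ℝ) (ha0 : 0 < a) (ha : a < 1) :
    ∫ t in (-a)..a, t * Real.log ((1 + t) / (1 - t)) / Real.sqrt (a ^ 2 - t ^ 2)
      = 2 * Real.pi * (1 - Real.sqrt (1 - a ^ 2)) := by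
  have ha2 : (0:ℝ) < 1 - a ^ 2 := by nlinarith
  set c := Real.sqrt (1 - a ^ 2) with hc_def
  have hc0 : 0 < c := Real.sqrt_pos.mpr ha2
  have hc2 : c ^ 2 = 1 - a ^ 2 := Real.sq_sqrt ha2.le
  set F : ℝ → ℝ := fun t => -Real.sqrt (a ^ 2 - t ^ 2) * Real.log ((1 + t) / (1 - t))
      + 2 * Real.arcsin (t / a) - 2 * c * Real.arcsin (c * t / (a * Real.sqrt (1 - t ^ 2)))
      with hF
  set f : ℝ → ℝ := fun t => t * Real.log ((1 + t) / (1 - t)) / Real.sqrt (a ^ 2 - t ^ 2)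
      with hf
  have hderiv : ∀ t ∈ Set.Ioo (-a) a, HasDerivAt F (f t) t := by
    intro t ht
    obtain ⟨ht1, ht2⟩ := ht
    have h1t : 0 < 1 - t := by nlinarith
    have h1t' : 0 < 1 + t := by nlinarith
    have hat : 0 < a ^ 2 - t ^ 2 := by nlinarith
    have hut : 0 < 1 - t ^ 2 := by nlinarith
    set s := Real.sqrt (a ^ 2 - t ^ 2) with hs_def
    set u := Real.sqrt (1 - t ^ 2) with hu_def
    have hs0 : 0 < s := Real.sqrt_pos.mpr hat
    have hs2 : s ^ 2 = a ^ 2 - t ^ 2 := Real.sq_sqrt hat.le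
    have hu0 : 0 < u := Real.sqrt_pos.mpr hut
    have hu2 : u ^ 2 = 1 - t ^ 2 := Real.sq_sqrt hut.le
    -- derivative of √(a²-t²)
    have hin : HasDerivAt (fun x : ℝ => a ^ 2 - x ^ 2) (-(2 * t)) t := by
      simpa using (hasDerivAt_pow 2 t).const_sub (a ^ 2)
    have hsq : HasDerivAt (fun x : ℝ => Real.sqrt (a ^ 2 - x ^ 2)) (-t / s) t := by
      have h := (Real.hasDerivAt_sqrt hat.ne').comp t hin
      refine h.congr_deriv ?_
      symm
      field_simp
      ring
    -- derivative of log((1+t)/(1-t))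
    have hq : HasDerivAt (fun x : ℝ => (1 + x) / (1 - x)) (2 / (1 - t) ^ 2) t := by
      have h1 : HasDerivAt (fun x : ℝ => 1 + x) 1 t := by
        simpa using (hasDerivAt_id t).const_add 1
      have h2 : HasDerivAt (fun x : ℝ => 1 - x) (-1) t := by
        simpa using (hasDerivAt_id t).const_sub 1
      have := h1.div h2 h1t.ne'
      refine this.congr_deriv ?_
      symm
      field_simp
      ring
    have hlog : HasDerivAt (fun x : ℝ => Real.log ((1 + x) / (1 - x))) (2 / (1 - t ^ 2)) t := by
      have hq0 : (1 + t) / (1 - t) ≠ 0 := by positivity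
      have h := (Real.hasDerivAt_log hq0).comp t hq
      simp only [Function.comp_def] at h
      refine h.congr_deriv ?_
      symm
      field_simp
      ring
    -- derivative of arcsin(t/a)
    have hta1 : t / a ≠ -1 := by
      intro h
      rw [div_eq_iff ha0.ne'] at h
      linarith
    have hta2 : t / a ≠ 1 := by
      intro h
      rw [div_eq_iff ha0.ne'] at h
      linarith
    have hdiva : HasDerivAt (fun x : ℝ => x / a) (1 / a) t := by
      simpa using (hasDerivAt_id t).div_const a
    have harc1 : HasDerivAt (fun x : ℝ => Real.arcsin (x / a)) (1 / s) t := by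
      have h := (Real.hasDerivAt_arcsin hta1 hta2).comp t hdiva
      simp only [Function.comp_def] at h
      have hsqrt : Real.sqrt (1 - (t / a) ^ 2) = s / a := by
        rw [show 1 - (t / a) ^ 2 = (a ^ 2 - t ^ 2) / a ^ 2 by field_simp,
          Real.sqrt_div hat.le, Real.sqrt_sq ha0.le]
      rw [hsqrt] at h
      refine h.congr_deriv ?_
      symm
      rw [one_div_div]
      field_simp
    -- derivative of arcsin(c t / (a √(1-t²)))
    have husq : HasDerivAt (fun x : ℝ => Real.sqrt (1 - x ^ 2)) (-t / u) t := by
      have hin' : HasDerivAt (fun x : ℝ => 1 - x ^ 2) (-(2 * t)) t := by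
        simpa using (hasDerivAt_pow 2 t).const_sub 1
      have h := (Real.hasDerivAt_sqrt hut.ne').comp t hin'
      refine h.congr_deriv ?_
      symm
      field_simp
      ring
    have hden : HasDerivAt (fun x : ℝ => a * Real.sqrt (1 - x ^ 2)) (a * (-t / u)) t :=
      husq.const_mul a
    have hnum : HasDerivAt (fun x : ℝ => c * x) c t := by
      simpa using (hasDerivAt_id t).const_mul c
    have hau : a * u ≠ 0 := (mul_pos ha0 hu0).ne'
    have hg : HasDerivAt (fun x : ℝ => c * x / (a * Real.sqrt (1 - x ^ 2)))
        ((c * (a * u) - c * t * (a * (-t / u))) / (a * u) ^ 2) t := hnum.div hden hau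
    have hgval1 : c * t / (a * u) ≠ -1 := by
      intro h
      rw [div_eq_iff hau] at h
      have hsq2 : (c * t) ^ 2 = (a * u) ^ 2 := by rw [h]; ring
      have ht2' : t ^ 2 = a ^ 2 := by
        linear_combination hsq2 - t ^ 2 * hc2 + a ^ 2 * hu2
      linarith
    have hgval2 : c * t / (a * u) ≠ 1 := by
      intro h
      rw [div_eq_iff hau] at h
      have hsq2 : (c * t) ^ 2 = (a * u) ^ 2 := by rw [h]; ring
      have ht2' : t ^ 2 = a ^ 2 := by
        linear_combination hsq2 - t ^ 2 * hc2 + a ^ 2 * hu2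
      linarith
    have hsg : Real.sqrt (1 - (c * t / (a * u)) ^ 2) = s / (a * u) := by
      have h1 : 1 - (c * t / (a * u)) ^ 2 = (a ^ 2 - t ^ 2) / (a * u) ^ 2 := by
        field_simp
        linear_combination a ^ 2 * hu2 - t ^ 2 * hc2
      rw [h1, Real.sqrt_div hat.le, Real.sqrt_sq (mul_pos ha0 hu0).le]
    have harc2 : HasDerivAt (fun x : ℝ => Real.arcsin (c * x / (a * Real.sqrt (1 - x ^ 2))))
        (c / ((1 - t ^ 2) * s)) t := by
      have h := (Real.hasDerivAt_arcsin hgval1 hgval2).comp t hg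
      simp only [Function.comp_def] at h
      rw [hsg] at h
      have hnum2 : c * (a * u) - c * t * (a * (-t / u)) = c * a / u := by
        field_simp
        linear_combination hu2
      rw [hnum2] at h
      refine h.congr_deriv ?_
      symm
      rw [one_div_div]
      field_simp
      linear_combination hu2
    -- assemble
    have hraw := ((hsq.neg.mul hlog).add (harc1.const_mul 2)).sub (harc2.const_mul (2 * c))
    simp only [hF, hf]
    refine hraw.congr_deriv ?_
    symm
    simp only [Pi.neg_apply]
    rw [← hs_def]
    field_simp
    linear_combination 2 * hs2 + 2 * hc2
  have hcont : ContinuousOn F (Set.Icc (-a) a) := by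
    rw [hF]
    apply ContinuousOn.sub
    apply ContinuousOn.add
    · apply ContinuousOn.mul
      · exact (Real.continuous_sqrt.comp (by continuity)).continuousOn.neg
      · apply ContinuousOn.log
        · apply ContinuousOn.div
          · exact (continuous_const.add continuous_id).continuousOn
          · exact (continuous_const.sub continuous_id).continuousOn
          · intro t ht
            have : 0 < 1 - t := by
              obtain ⟨_, ht2⟩ := ht
              nlinarith
            exact this.ne'
        · intro t ht
          obtain ⟨ht1, ht2⟩ := ht
          have h1 : 0 < 1 + t := by nlinarith
          have h2 : 0 < 1 - t := by nlinarith
          positivity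
    · exact (continuous_const.mul
        (Real.continuous_arcsin.comp (continuous_id.div_const a))).continuousOn
    · apply ContinuousOn.mul continuousOn_const
      apply Real.continuous_arcsin.comp_continuousOn
      apply ContinuousOn.div
      · exact (continuous_const.mul continuous_id).continuousOn
      · exact (continuous_const.mul (Real.continuous_sqrt.comp (by continuity))).continuousOn
      · intro t ht
        obtain ⟨ht1, ht2⟩ := ht
        have h : 0 < 1 - t ^ 2 := by nlinarith
        have h2 := Real.sqrt_pos.mpr h
        positivity
  have hnonneg : ∀ t ∈ Set.Ioo (-a) a, 0 ≤ f t := by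
    intro t ht
    obtain ⟨ht1, ht2⟩ := ht
    have h1t : 0 < 1 - t := by nlinarith
    have h1t' : 0 < 1 + t := by nlinarith
    rw [hf]
    apply div_nonneg _ (Real.sqrt_nonneg _)
    rcases le_or_gt 0 t with h | h
    · apply mul_nonneg h
      apply Real.log_nonneg
      rw [le_div_iff₀ h1t]
      linarith
    · have hL : Real.log ((1 + t) / (1 - t)) ≤ 0 := by
        apply Real.log_nonpos (by positivity)
        rw [div_le_one h1t]
        linarith
      nlinarith [mul_nonneg (neg_nonneg.2 h.le) (neg_nonneg.2 hL)]
  have hle : -a ≤ a := by linarith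
  have hint : IntervalIntegrable f volume (-a) a := by
    apply intervalIntegrable_deriv_of_nonneg
    · rwa [Set.uIcc_of_le hle]
    · rwa [min_eq_left hle, max_eq_right hle]
    · rwa [min_eq_left hle, max_eq_right hle]
  have key := integral_eq_sub_of_hasDerivAt_of_le hle hcont hderiv hint
  rw [hf] at key
  simp only at key
  have e1 : Real.sqrt (a ^ 2 - a ^ 2) = 0 := by simp
  have e2 : Real.sqrt (a ^ 2 - (-a) ^ 2) = 0 := by rw [neg_sq]; simp
  have e3 : a / a = 1 := div_self ha0.ne'
  have e4 : (-a) / a = -1 := by rw [neg_div, e3]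
  have e5 : Real.sqrt (1 - (-a) ^ 2) = c := by rw [hc_def, neg_sq]
  have e6 : c * a / (a * c) = 1 := by
    rw [mul_comm a c]
    exact div_self (mul_pos hc0 ha0).ne'
  have e7 : c * (-a) / (a * Real.sqrt (1 - (-a) ^ 2)) = -1 := by
    rw [e5, mul_comm a c, mul_neg, neg_div, div_self (mul_pos hc0 ha0).ne']
  have hFa : F a = Real.pi - c * Real.pi := by
    simp only [hF]
    rw [e1, e3, ← hc_def, e6, Real.arcsin_one]
    ring
  have hFna : F (-a) = -(Real.pi - c * Real.pi) := by
    simp only [hF]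
    rw [e2, e4, e7, Real.arcsin_neg_one]
    ring
  rw [key, hFa, hFna]
  ring
end
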